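/- arXiv:1611.07099 — 9 statements merged into one kernel-verified Lean document; each statement's English description precedes it below -/
import Mathlib

section
/- Let g : [0,T] → ℝ be continuous with g(0) = 0, let t ∈ (0,T], and let G_k = G_k(t) be the running main extremum values of g at time t. Then 2|G_1| ≥ |G_2 − G_1| ≥ |G_3 − G_2| ≥ ⋯ ≥ |G_i − G_{i−1}| ≥ ⋯ for all i ≥ 2. Moreover, if g is piecewise monotone on [0,t], then only finitely many of the differences G_i − G_{i−1} are nonzero. -/
open MeasureTheory Set

noncomputable section

def nextUp (g : ℝ → ℝ) (t τk : ℝ) : ℝ × ℝ :=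
  (sSup {s | s ∈ Icc τk t ∧ g s = sSup (g '' Icc τk t)}, sSup (g '' Icc τk t))

def nextDown (g : ℝ → ℝ) (t τk : ℝ) : ℝ × ℝ :=
  (sSup {s | s ∈ Icc τk t ∧ g s = sInf (g '' Icc τk t)}, sInf (g '' Icc τk t))

def tau1 (g : ℝ → ℝ) (t : ℝ) : ℝ :=
  sSup {τ | τ ∈ Icc 0 t ∧ |g τ| = sSup ((fun τ => |g τ|) '' Icc 0 t)}

open Classical in
/-- `mainPair g t k = (τ_{k+1}, G_{k+1}(t))`: the running main extremum values
of `g` on `[0,t]` together with the (last) times at which they are attained. -/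
def mainPair (g : ℝ → ℝ) (t : ℝ) : ℕ → ℝ × ℝ
  | 0 => (tau1 g t, g (tau1 g t))
  | k + 1 =>
      if g (tau1 g t) ≤ 0 ↔ Even k then nextUp g t (mainPair g t k).1
      else nextDown g t (mainPair g t k).1

/-- The running main extremum values `G_k(t)` of `g` on `[0,t]`. -/
def runningG (g : ℝ → ℝ) (t : ℝ) : ℕ → ℝ
  | 0 => sSup ((fun τ => |g τ|) '' Icc 0 t)
  | k + 1 => (mainPair g t k).2

/-- `g` is piecewise monotone on `[a,b]`. -/
def PiecewiseMonotoneOn (g : ℝ → ℝ) (a b : ℝ) : Prop :=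
  ∃ (n : ℕ) (p : ℕ → ℝ), p 0 = a ∧ p n = b ∧ (∀ i < n, p i ≤ p (i + 1)) ∧
    ∀ i < n, MonotoneOn g (Icc (p i) (p (i + 1))) ∨ AntitoneOn g (Icc (p i) (p (i + 1)))

/-! ### Auxiliary lemmas -/

section Aux

variable {g : ℝ → ℝ} {t : ℝ}

lemma nextUp_spec (hgt : ContinuousOn g (Icc 0 t)) {τ : ℝ} (hτ : τ ∈ Icc 0 t) :
    (nextUp g t τ).1 ∈ Icc τ t ∧ g (nextUp g t τ).1 = (nextUp g t τ).2 ∧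
      ∀ s ∈ Icc τ t, g s ≤ (nextUp g t τ).2 := by
  have hK : IsCompact (Icc τ t) := isCompact_Icc
  have hne : (Icc τ t).Nonempty := ⟨τ, le_refl τ, hτ.2⟩
  have hcont : ContinuousOn g (Icc τ t) := hgt.mono (Icc_subset_Icc hτ.1 le_rfl)
  obtain ⟨x, hx, hxM⟩ := hK.exists_sSup_image_eq hne hcont
  have hSne : {s | s ∈ Icc τ t ∧ g s = sSup (g '' Icc τ t)}.Nonempty := ⟨x, hx, hxM.symm⟩
  have hScl : IsClosed {s | s ∈ Icc τ t ∧ g s = sSup (g '' Icc τ t)} := by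
    have h2 := hcont.preimage_isClosed_of_isClosed isClosed_Icc
      (isClosed_singleton (x := sSup (g '' Icc τ t)))
    convert h2 using 1
    rfl
  have hScomp : IsCompact {s | s ∈ Icc τ t ∧ g s = sSup (g '' Icc τ t)} :=
    hK.of_isClosed_subset hScl (fun s hs => hs.1)
  have hmem := hScomp.sSup_mem hSne
  have hb : ∀ s ∈ Icc τ t, g s ≤ sSup (g '' Icc τ t) := fun s hs =>
    le_csSup (hK.image_of_continuousOn hcont).bddAbove ⟨s, hs, rfl⟩
  exact ⟨hmem.1, hmem.2, hb⟩

lemma nextDown_spec (hgt : ContinuousOn g (Icc 0 t)) {τ : ℝ} (hτ : τ ∈ Icc 0 t) :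
    (nextDown g t τ).1 ∈ Icc τ t ∧ g (nextDown g t τ).1 = (nextDown g t τ).2 ∧
      ∀ s ∈ Icc τ t, (nextDown g t τ).2 ≤ g s := by
  have hK : IsCompact (Icc τ t) := isCompact_Icc
  have hne : (Icc τ t).Nonempty := ⟨τ, le_refl τ, hτ.2⟩
  have hcont : ContinuousOn g (Icc τ t) := hgt.mono (Icc_subset_Icc hτ.1 le_rfl)
  obtain ⟨x, hx, hxM⟩ := hK.exists_sInf_image_eq hne hcont
  have hSne : {s | s ∈ Icc τ t ∧ g s = sInf (g '' Icc τ t)}.Nonempty := ⟨x, hx, hxM.symm⟩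
  have hScl : IsClosed {s | s ∈ Icc τ t ∧ g s = sInf (g '' Icc τ t)} := by
    have h2 := hcont.preimage_isClosed_of_isClosed isClosed_Icc
      (isClosed_singleton (x := sInf (g '' Icc τ t)))
    convert h2 using 1
    rfl
  have hScomp : IsCompact {s | s ∈ Icc τ t ∧ g s = sInf (g '' Icc τ t)} :=
    hK.of_isClosed_subset hScl (fun s hs => hs.1)
  have hmem := hScomp.sSup_mem hSne
  have hb : ∀ s ∈ Icc τ t, sInf (g '' Icc τ t) ≤ g s := fun s hs =>
    csInf_le (hK.image_of_continuousOn hcont).bddBelow ⟨s, hs, rfl⟩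
  exact ⟨hmem.1, hmem.2, hb⟩

lemma tau1_spec (hgt : ContinuousOn g (Icc 0 t)) (ht0 : (0:ℝ) ≤ t) :
    tau1 g t ∈ Icc 0 t ∧ |g (tau1 g t)| = sSup ((fun τ => |g τ|) '' Icc 0 t) ∧
      ∀ s ∈ Icc 0 t, |g s| ≤ sSup ((fun τ => |g τ|) '' Icc 0 t) := by
  have hK : IsCompact (Icc (0:ℝ) t) := isCompact_Icc
  have hne : (Icc (0:ℝ) t).Nonempty := ⟨0, le_refl 0, ht0⟩
  have hcont : ContinuousOn (fun τ => |g τ|) (Icc 0 t) := hgt.abs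
  obtain ⟨x, hx, hxM⟩ := hK.exists_sSup_image_eq hne hcont
  have hSne : {τ | τ ∈ Icc 0 t ∧ |g τ| = sSup ((fun τ => |g τ|) '' Icc 0 t)}.Nonempty :=
    ⟨x, hx, hxM.symm⟩
  have hScl : IsClosed {τ | τ ∈ Icc 0 t ∧ |g τ| = sSup ((fun τ => |g τ|) '' Icc 0 t)} := by
    have h2 := hcont.preimage_isClosed_of_isClosed isClosed_Icc
      (isClosed_singleton (x := sSup ((fun τ => |g τ|) '' Icc 0 t)))
    convert h2 using 1
    rfl
  have hScomp : IsCompact {τ | τ ∈ Icc 0 t ∧ |g τ| = sSup ((fun τ => |g τ|) '' Icc 0 t)} :=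
    hK.of_isClosed_subset hScl (fun s hs => hs.1)
  have hmem := hScomp.sSup_mem hSne
  have hb : ∀ s ∈ Icc 0 t, |g s| ≤ sSup ((fun τ => |g τ|) '' Icc 0 t) := fun s hs =>
    le_csSup (hK.image_of_continuousOn hcont).bddAbove ⟨s, hs, rfl⟩
  exact ⟨hmem.1, hmem.2, hb⟩

/-- Main invariant for `mainPair`: the times stay in `[0,t]`, the values are attained
at the times, and the values bound `g` from the correct side on the remaining interval. -/
lemma mainPair_inv (hgt : ContinuousOn g (Icc 0 t)) (ht0 : (0:ℝ) ≤ t) : ∀ k : ℕ,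
    (mainPair g t k).1 ∈ Icc 0 t ∧
    g (mainPair g t k).1 = (mainPair g t k).2 ∧
    ((g (tau1 g t) ≤ 0 ↔ Odd k) →
      ∀ s ∈ Icc (mainPair g t k).1 t, g s ≤ (mainPair g t k).2) ∧
    (¬(g (tau1 g t) ≤ 0 ↔ Odd k) →
      ∀ s ∈ Icc (mainPair g t k).1 t, (mainPair g t k).2 ≤ g s) := by
  classical
  intro k
  induction k with
  | zero =>
    obtain ⟨hmem, hval, hb⟩ := tau1_spec hgt ht0
    refine ⟨hmem, rfl, ?_, ?_⟩
    · intro hU s hs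
      have h1 : ¬ g (tau1 g t) ≤ 0 := fun h => (by decide : ¬ Odd 0) (hU.mp h)
      have h2 : |g (tau1 g t)| = g (tau1 g t) := abs_of_pos (lt_of_not_ge h1)
      have h3 : g s ≤ |g s| := le_abs_self _
      have h4 := hb s ⟨le_trans hmem.1 hs.1, hs.2⟩
      show g s ≤ g (tau1 g t)
      linarith
    · intro hU s hs
      have h1 : g (tau1 g t) ≤ 0 := by
        by_contra h1; exact hU (iff_of_false h1 (by decide))
      have h2 : |g (tau1 g t)| = -g (tau1 g t) := abs_of_nonpos h1
      have h3 : -|g s| ≤ g s := neg_abs_le _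
      have h4 := hb s ⟨le_trans hmem.1 hs.1, hs.2⟩
      show g (tau1 g t) ≤ g s
      linarith
  | succ k ih =>
    have hpar : Odd (k+1) ↔ Even k := by rw [Nat.odd_iff, Nat.even_iff]; omega
    by_cases hc : g (tau1 g t) ≤ 0 ↔ Even k
    · have e : mainPair g t (k+1) = nextUp g t (mainPair g t k).1 := by
        show (if g (tau1 g t) ≤ 0 ↔ Even k then nextUp g t (mainPair g t k).1
          else nextDown g t (mainPair g t k).1) = _
        exact if_pos hc
      obtain ⟨hm, hv, hb⟩ := nextUp_spec hgt ih.1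
      have hU : g (tau1 g t) ≤ 0 ↔ Odd (k+1) := hc.trans hpar.symm
      refine ⟨?_, ?_, ?_, ?_⟩
      · rw [e]; exact ⟨le_trans ih.1.1 hm.1, hm.2⟩
      · rw [e]; exact hv
      · intro _ s hs; rw [e] at hs ⊢; exact hb s ⟨le_trans hm.1 hs.1, hs.2⟩
      · intro h; exact absurd hU h
    · have e : mainPair g t (k+1) = nextDown g t (mainPair g t k).1 := by
        show (if g (tau1 g t) ≤ 0 ↔ Even k then nextUp g t (mainPair g t k).1
          else nextDown g t (mainPair g t k).1) = _
        exact if_neg hc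
      obtain ⟨hm, hv, hb⟩ := nextDown_spec hgt ih.1
      have hU : ¬(g (tau1 g t) ≤ 0 ↔ Odd (k+1)) := fun h => hc (h.trans hpar)
      refine ⟨?_, ?_, ?_, ?_⟩
      · rw [e]; exact ⟨le_trans ih.1.1 hm.1, hm.2⟩
      · rw [e]; exact hv
      · intro h; exact absurd h hU
      · intro _ s hs; rw [e] at hs ⊢; exact hb s ⟨le_trans hm.1 hs.1, hs.2⟩

/-- Step comparison for `mainPair`: the times increase and consecutive values
are comparable in the direction of the step. -/
lemma mainPair_step (hgt : ContinuousOn g (Icc 0 t)) (ht0 : (0:ℝ) ≤ t) (k : ℕ) :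
    (mainPair g t k).1 ≤ (mainPair g t (k+1)).1 ∧
    ((g (tau1 g t) ≤ 0 ↔ Odd (k+1)) → (mainPair g t k).2 ≤ (mainPair g t (k+1)).2) ∧
    (¬(g (tau1 g t) ≤ 0 ↔ Odd (k+1)) → (mainPair g t (k+1)).2 ≤ (mainPair g t k).2) := by
  classical
  obtain ⟨hm0, hv0, -, -⟩ := mainPair_inv hgt ht0 k
  have hpar : Odd (k+1) ↔ Even k := by rw [Nat.odd_iff, Nat.even_iff]; omega
  by_cases hc : g (tau1 g t) ≤ 0 ↔ Even k
  · have e : mainPair g t (k+1) = nextUp g t (mainPair g t k).1 := by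
      show (if g (tau1 g t) ≤ 0 ↔ Even k then nextUp g t (mainPair g t k).1
        else nextDown g t (mainPair g t k).1) = _
      exact if_pos hc
    obtain ⟨hm, hv, hb⟩ := nextUp_spec hgt hm0
    refine ⟨by rw [e]; exact hm.1, fun _ => ?_, fun h => absurd (hc.trans hpar.symm) h⟩
    rw [e, ← hv0]
    exact hb _ ⟨le_rfl, hm0.2⟩
  · have e : mainPair g t (k+1) = nextDown g t (mainPair g t k).1 := by
      show (if g (tau1 g t) ≤ 0 ↔ Even k then nextUp g t (mainPair g t k).1
        else nextDown g t (mainPair g t k).1) = _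
      exact if_neg hc
    obtain ⟨hm, hv, hb⟩ := nextDown_spec hgt hm0
    refine ⟨by rw [e]; exact hm.1, fun h => absurd (h.trans hpar) hc, fun _ => ?_⟩
    rw [e, ← hv0]
    exact hb _ ⟨le_rfl, hm0.2⟩

lemma tau_mono (hgt : ContinuousOn g (Icc 0 t)) (ht0 : (0:ℝ) ≤ t) :
    ∀ a b : ℕ, a ≤ b → (mainPair g t a).1 ≤ (mainPair g t b).1 := by
  intro a b hab
  induction b, hab using Nat.le_induction with
  | base => exact le_rfl
  | succ b hab ih => exact le_trans ih (mainPair_step hgt ht0 b).1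

end Aux

/-- Monotonicity of the increments of the running main extremum values, and
finiteness of the nonzero increments for piecewise monotone inputs. -/
theorem runningG_increments (T : ℝ) (hT : 0 < T) (g : ℝ → ℝ)
    (hg : ContinuousOn g (Icc 0 T)) (hg0 : g 0 = 0)
    (t : ℝ) (ht : t ∈ Ioc 0 T) :
    (|runningG g t 2 - runningG g t 1| ≤ 2 * |runningG g t 1|) ∧
    (∀ i, 2 ≤ i →
      |runningG g t (i + 1) - runningG g t i| ≤ |runningG g t i - runningG g t (i - 1)|) ∧
    (PiecewiseMonotoneOn g 0 t →
      {i : ℕ | 2 ≤ i ∧ runningG g t i ≠ runningG g t (i - 1)}.Finite) := by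
  classical
  have ht0 : (0:ℝ) ≤ t := le_of_lt ht.1
  have hgt : ContinuousOn g (Icc 0 t) := hg.mono (Icc_subset_Icc le_rfl ht.2)
  have inv := mainPair_inv hgt ht0
  have step := mainPair_step hgt ht0
  have tmono := tau_mono hgt ht0
  have Gval : ∀ j, g (mainPair g t j).1 = (mainPair g t j).2 := fun j => (inv j).2.1
  obtain ⟨hτ1mem, hτ1val, hτ1b⟩ := tau1_spec hgt ht0
  have parodd : ∀ k : ℕ, Odd (k+2) ↔ Odd k := fun k => by rw [Nat.odd_iff, Nat.odd_iff]; omega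
  have parsucc : ∀ k : ℕ, Odd (k+1) ↔ ¬ Odd k := fun k => by
    rw [Nat.odd_iff, Nat.odd_iff]; omega
  refine ⟨?_, ?_, ?_⟩
  · -- Part 1 : |G₂ - G₁| ≤ 2 |G₁|
    have hb1 : |(mainPair g t 1).2| ≤ |g (tau1 g t)| := by
      rw [← Gval 1, hτ1val]
      exact hτ1b _ (inv 1).1
    have habs : |(mainPair g t 1).2 - g (tau1 g t)| ≤ |(mainPair g t 1).2| + |g (tau1 g t)| :=
      abs_sub _ _
    show |(mainPair g t 1).2 - (mainPair g t 0).2| ≤ 2 * |(mainPair g t 0).2|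
    have e0 : (mainPair g t 0).2 = g (tau1 g t) := rfl
    rw [e0]
    linarith
  · -- Part 2 : decreasing increments
    intro i hi
    obtain ⟨k, rfl⟩ : ∃ k, i = k + 2 := ⟨i - 2, by omega⟩
    show |(mainPair g t (k+2)).2 - (mainPair g t (k+1)).2| ≤
      |(mainPair g t (k+1)).2 - (mainPair g t k).2|
    have hτk2 : (mainPair g t (k+2)).1 ∈ Icc (mainPair g t k).1 t :=
      ⟨tmono k (k+2) (by omega), (inv (k+2)).1.2⟩
    have hvk2 := Gval (k+2)
    by_cases hU : g (tau1 g t) ≤ 0 ↔ Odd (k+2)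
    · have hUk : g (tau1 g t) ≤ 0 ↔ Odd k := hU.trans (parodd k)
      have hU1 : ¬(g (tau1 g t) ≤ 0 ↔ Odd (k+1)) := by
        have h2 := parodd k; have h3 := parsucc k; tauto
      have a1 : (mainPair g t (k+1)).2 ≤ (mainPair g t (k+2)).2 := (step (k+1)).2.1 hU
      have a2 : (mainPair g t (k+2)).2 ≤ (mainPair g t k).2 := by
        rw [← hvk2]; exact (inv k).2.2.1 hUk _ hτk2
      have a3 : (mainPair g t (k+1)).2 ≤ (mainPair g t k).2 := (step k).2.2 hU1
      rw [abs_of_nonneg (by linarith), abs_of_nonpos (by linarith)]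
      linarith
    · have hUk : ¬(g (tau1 g t) ≤ 0 ↔ Odd k) := fun h => hU (h.trans (parodd k).symm)
      have hU1 : g (tau1 g t) ≤ 0 ↔ Odd (k+1) := by
        have h2 := parodd k; have h3 := parsucc k; have h4 := parsucc (k+1); tauto
      have a1 : (mainPair g t (k+2)).2 ≤ (mainPair g t (k+1)).2 := (step (k+1)).2.2 hU
      have a2 : (mainPair g t k).2 ≤ (mainPair g t (k+2)).2 := by
        rw [← hvk2]; exact (inv k).2.2.2 hUk _ hτk2
      have a3 : (mainPair g t k).2 ≤ (mainPair g t (k+1)).2 := (step k).2.1 hU1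
      rw [abs_of_nonpos (by linarith), abs_of_nonneg (by linarith)]
      linarith
  · -- Part 3 : finiteness for piecewise monotone g
    intro hpm
    -- once an increment vanishes, all later values are equal
    have propagate : ∀ k, (mainPair g t (k+1)).2 = (mainPair g t k).2 →
        ∀ j, k + 1 ≤ j → (mainPair g t j).2 = (mainPair g t k).2 := by
      intro k hk j hj
      have hτj : (mainPair g t j).1 ∈ Icc (mainPair g t (k+1)).1 t :=
        ⟨tmono (k+1) j hj, (inv j).1.2⟩
      have hτj' : (mainPair g t j).1 ∈ Icc (mainPair g t k).1 t :=
        ⟨le_trans (step k).1 hτj.1, hτj.2⟩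
      by_cases hU : g (tau1 g t) ≤ 0 ↔ Odd (k+1)
      · have hUk : ¬(g (tau1 g t) ≤ 0 ↔ Odd k) := by have := parsucc k; tauto
        have h1 : g (mainPair g t j).1 ≤ (mainPair g t (k+1)).2 := (inv (k+1)).2.2.1 hU _ hτj
        have h2 : (mainPair g t k).2 ≤ g (mainPair g t j).1 := (inv k).2.2.2 hUk _ hτj'
        rw [← Gval j]
        linarith [hk.le, hk.ge]
      · have hUk : g (tau1 g t) ≤ 0 ↔ Odd k := by have := parsucc k; tauto
        have h1 : (mainPair g t (k+1)).2 ≤ g (mainPair g t j).1 := (inv (k+1)).2.2.2 hU _ hτj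
        have h2 : g (mainPair g t j).1 ≤ (mainPair g t k).2 := (inv k).2.2.1 hUk _ hτj'
        rw [← Gval j]
        linarith [hk.le, hk.ge]
    -- some increment vanishes
    have exk : ∃ k, (mainPair g t (k+1)).2 = (mainPair g t k).2 := by
      by_contra hne
      push_neg at hne
      obtain ⟨n, p, hp0, hpn, hpm1, hpm2⟩ := hpm
      have hn : 0 < n := by
        rcases Nat.eq_zero_or_pos n with h | h
        · exfalso; rw [h, hp0] at hpn; linarith [ht.1]
        · exact h
      have tstrict : ∀ k, (mainPair g t k).1 < (mainPair g t (k+1)).1 := by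
        intro k
        rcases lt_or_eq_of_le (step k).1 with h | h
        · exact h
        · exact absurd (by rw [← Gval (k+1), ← Gval k, ← h]) (hne k)
      have valt : ∀ k,
          ((g (tau1 g t) ≤ 0 ↔ Odd (k+1)) → (mainPair g t k).2 < (mainPair g t (k+1)).2) ∧
          (¬(g (tau1 g t) ≤ 0 ↔ Odd (k+1)) → (mainPair g t (k+1)).2 < (mainPair g t k).2) := by
        intro k
        exact ⟨fun h => lt_of_le_of_ne ((step k).2.1 h) (Ne.symm (hne k)),
          fun h => lt_of_le_of_ne ((step k).2.2 h) (hne k)⟩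
      -- between τ_k and τ_{k+2} there is a partition point
      have bp : ∀ k, ∃ i, 1 ≤ i ∧ i ≤ n ∧
          (mainPair g t k).1 < p i ∧ p i < (mainPair g t (k+2)).1 := by
        intro k
        have hP0 : p 0 ≤ (mainPair g t k).1 := by rw [hp0]; exact (inv k).1.1
        have hi0P : p (Nat.findGreatest (fun i => p i ≤ (mainPair g t k).1) n) ≤
            (mainPair g t k).1 :=
          Nat.findGreatest_spec (P := fun i => p i ≤ (mainPair g t k).1) (Nat.zero_le n) hP0
        have hi0n : Nat.findGreatest (fun i => p i ≤ (mainPair g t k).1) n ≤ n :=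
          Nat.findGreatest_le n
        have hlt2 : (mainPair g t k).1 < (mainPair g t (k+2)).1 :=
          lt_trans (tstrict k) (tstrict (k+1))
        have ht2 : (mainPair g t (k+2)).1 ≤ t := (inv (k+2)).1.2
        set i0 := Nat.findGreatest (fun i => p i ≤ (mainPair g t k).1) n with hi0def
        have hi0lt : i0 < n := by
          rcases lt_or_eq_of_le hi0n with h | h
          · exact h
          · exfalso; rw [h, hpn] at hi0P; linarith
        have hgt0 : (mainPair g t k).1 < p (i0+1) := by
          by_contra hle
          push_neg at hle
          exact Nat.findGreatest_is_greatest (Nat.lt_succ_self i0) (by omega) hle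
        refine ⟨i0+1, by omega, by omega, hgt0, ?_⟩
        by_contra hge
        push_neg at hge
        have hx1 : (mainPair g t k).1 ∈ Icc (p i0) (p (i0+1)) :=
          ⟨hi0P, le_trans (le_of_lt hlt2) hge⟩
        have hx2 : (mainPair g t (k+1)).1 ∈ Icc (p i0) (p (i0+1)) :=
          ⟨le_trans hi0P (le_of_lt (tstrict k)), le_trans (le_of_lt (tstrict (k+1))) hge⟩
        have hx3 : (mainPair g t (k+2)).1 ∈ Icc (p i0) (p (i0+1)) :=
          ⟨le_trans hi0P (le_of_lt hlt2), hge⟩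
        by_cases hU : g (tau1 g t) ≤ 0 ↔ Odd (k+1)
        · have hU2 : ¬(g (tau1 g t) ≤ 0 ↔ Odd (k+2)) := by have := parsucc (k+1); tauto
          have v1 : (mainPair g t k).2 < (mainPair g t (k+1)).2 := (valt k).1 hU
          have v2 : (mainPair g t (k+2)).2 < (mainPair g t (k+1)).2 := (valt (k+1)).2 hU2
          rcases hpm2 i0 hi0lt with hmono | hanti
          · have h5 := hmono hx2 hx3 (le_of_lt (tstrict (k+1)))
            rw [Gval (k+1), Gval (k+2)] at h5; linarith
          · have h5 := hanti hx1 hx2 (le_of_lt (tstrict k))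
            rw [Gval k, Gval (k+1)] at h5; linarith
        · have hU2 : g (tau1 g t) ≤ 0 ↔ Odd (k+2) := by have := parsucc (k+1); tauto
          have v1 : (mainPair g t (k+1)).2 < (mainPair g t k).2 := (valt k).2 hU
          have v2 : (mainPair g t (k+1)).2 < (mainPair g t (k+2)).2 := (valt (k+1)).1 hU2
          rcases hpm2 i0 hi0lt with hmono | hanti
          · have h5 := hmono hx1 hx2 (le_of_lt (tstrict k))
            rw [Gval k, Gval (k+1)] at h5; linarith
          · have h5 := hanti hx2 hx3 (le_of_lt (tstrict (k+1)))
            rw [Gval (k+1), Gval (k+2)] at h5; linarith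
      choose f hf1 hfn hfl hfr using bp
      have hinj : ∀ j j', j < j' → f (2*j) ≠ f (2*j') := by
        intro j j' hjj heq
        have h1 : p (f (2*j)) < (mainPair g t (2*j+2)).1 := hfr (2*j)
        have h2 : (mainPair g t (2*j+2)).1 ≤ (mainPair g t (2*j')).1 := tmono _ _ (by omega)
        have h3 : (mainPair g t (2*j')).1 < p (f (2*j')) := hfl (2*j')
        rw [heq] at h1
        linarith
      have hcard : (Finset.range (n+1)).card ≤ (Finset.Icc 1 n).card := by
        apply Finset.card_le_card_of_injOn (fun j => f (2*j))
        · intro j _; exact Finset.mem_Icc.mpr ⟨hf1 _, hfn _⟩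
        · intro a _ b _ hab
          by_contra hne'
          rcases Nat.lt_or_ge a b with h | h
          · exact hinj a b h hab
          · exact hinj b a (by omega) hab.symm
      rw [Finset.card_range, Nat.card_Icc] at hcard
      omega
    obtain ⟨k0, hk0⟩ := exk
    apply Set.Finite.subset (Set.finite_Iio (k0 + 3))
    intro i hi
    simp only [Set.mem_setOf_eq] at hi
    by_contra hnotlt
    simp only [Set.mem_Iio, not_lt] at hnotlt
    obtain ⟨m, rfl⟩ : ∃ m, i = m + 3 := ⟨i - 3, by omega⟩
    have e1 : runningG g t (m+3) = (mainPair g t (m+2)).2 := rfl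
    have e2 : runningG g t (m+3-1) = (mainPair g t (m+1)).2 := rfl
    have g1 := propagate k0 hk0 (m+2) (by omega)
    have g2 := propagate k0 hk0 (m+1) (by omega)
    exact hi.2 (by rw [e1, e2, g1, g2])

end
end

section
/- Let 0 = d_0 < d_1 < ⋯ < d_ℓ = L be real numbers and let (G_i)_{i≥1} be real numbers with 0 ≤ G_1 ≤ L, 2G_1 ≥ |G_2 − G_1| ≥ |G_3 − G_2| ≥ ⋯, and G_i − G_{i−1} = 0 for all but finitely many i ≥ 2. For 1 ≤ k ≤ ℓ define ξ_k = (min{G_1, d_k} − d_{k−1})^+ + Σ_{i≥2} (−1)^{i−1} (min{|G_i − G_{i−1}|, 2d_k} − 2d_{k−1})^+, where a^+ = max{a, 0}. Then |ξ_k| ≤ d_k − d_{k−1} for every k = 1, …, ℓ. -/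
open MeasureTheory Set

noncomputable section

private lemma alt_aux (u : ℕ → ℝ) (hu : ∀ i, u (i + 1) ≤ u i) :
    ∀ n, (Even n → -u 0 + u n ≤ ∑ i ∈ Finset.range n, (-1 : ℝ) ^ (i + 1) * u i ∧
            ∑ i ∈ Finset.range n, (-1 : ℝ) ^ (i + 1) * u i ≤ 0) ∧
         (¬ Even n → -u 0 ≤ ∑ i ∈ Finset.range n, (-1 : ℝ) ^ (i + 1) * u i ∧
            ∑ i ∈ Finset.range n, (-1 : ℝ) ^ (i + 1) * u i ≤ -u n) := by
  intro n
  induction n with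
  | zero =>
    constructor
    · intro _; simp
    · intro h; exact absurd (Even.zero) h
  | succ n ih =>
    rw [Finset.sum_range_succ]
    rcases Nat.even_or_odd n with he | ho
    · -- n even, n+1 odd
      have hpow : (-1 : ℝ) ^ (n + 1) = -1 := (Even.add_one he).neg_one_pow
      obtain ⟨h1, h2⟩ := ih.1 he
      have hun1 : u (n + 1) ≤ u n := hu n
      constructor
      · intro h; exact absurd he (Nat.even_add_one.mp h)
      · intro _
        rw [hpow]
        constructor <;> nlinarith
    · -- n odd, n+1 even
      have hne : ¬ Even n := Nat.not_even_iff_odd.mpr ho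
      have hpow : (-1 : ℝ) ^ (n + 1) = 1 := by
        have : Even (n + 1) := Odd.add_one ho
        exact this.neg_one_pow
      obtain ⟨h1, h2⟩ := ih.2 hne
      have hun1 : u (n + 1) ≤ u n := hu n
      constructor
      · intro _
        rw [hpow]
        constructor <;> nlinarith
      · intro h; exact absurd (Odd.add_one ho) h

private lemma alt_sum_bound (u : ℕ → ℝ) (hu : ∀ i, u (i + 1) ≤ u i)
    (hnn : ∀ i, 0 ≤ u i) (n : ℕ) :
    -u 0 ≤ ∑ i ∈ Finset.range n, (-1 : ℝ) ^ (i + 1) * u i ∧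
      ∑ i ∈ Finset.range n, (-1 : ℝ) ^ (i + 1) * u i ≤ 0 := by
  rcases Nat.even_or_odd n with he | ho
  · obtain ⟨h1, h2⟩ := (alt_aux u hu n).1 he
    exact ⟨by linarith [hnn n], h2⟩
  · obtain ⟨h1, h2⟩ := (alt_aux u hu n).2 (Nat.not_even_iff_odd.mpr ho)
    exact ⟨h1, by linarith [hnn n]⟩

/-- The coefficients `ξ_k` built from the running main extremum values satisfy
`|ξ_k| ≤ d_k - d_{k-1}`. -/
theorem xi_bounded (ℓ : ℕ) (hℓ : 1 ≤ ℓ) (L : ℝ) (d : ℕ → ℝ)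
    (hd0 : d 0 = 0) (hdL : d ℓ = L) (hdmono : ∀ k < ℓ, d k < d (k + 1))
    (G : ℕ → ℝ) (hG1 : 0 ≤ G 1) (hGL : G 1 ≤ L)
    (h2 : |G 2 - G 1| ≤ 2 * G 1)
    (hdec : ∀ i, 2 ≤ i → |G (i + 1) - G i| ≤ |G i - G (i - 1)|)
    (hfin : {i : ℕ | 2 ≤ i ∧ G i ≠ G (i - 1)}.Finite)
    (k : ℕ) (hk1 : 1 ≤ k) (hkℓ : k ≤ ℓ) :
    |max (min (G 1) (d k) - d (k - 1)) 0 +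
        ∑ᶠ i : ℕ, (-1 : ℝ) ^ (i + 1) *
          max (min |G (i + 2) - G (i + 1)| (2 * d k) - 2 * d (k - 1)) 0|
      ≤ d k - d (k - 1) := by
  set a := d (k - 1) with ha_def
  set b := d k with hb_def
  -- basic facts about d
  have hmono0 : ∀ j, j ≤ ℓ → d 0 ≤ d j := by
    intro j hj
    induction j with
    | zero => exact le_rfl
    | succ n ih =>
      have hn : n < ℓ := hj
      exact le_trans (ih hn.le) (hdmono n hn).le
  have hab : a < b := by
    have hklt : k - 1 < ℓ := by omega
    have := hdmono (k - 1) hklt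
    rwa [Nat.sub_add_cancel hk1] at this
  have ha0 : 0 ≤ a := by
    have := hmono0 (k - 1) (by omega)
    rwa [hd0] at this
  have hb0 : 0 ≤ b := le_trans ha0 hab.le
  -- the sequence u
  set u : ℕ → ℝ := fun i => max (min |G (i + 2) - G (i + 1)| (2 * b) - 2 * a) 0 with hu_def
  have hnn : ∀ i, 0 ≤ u i := fun i => le_max_right _ _
  have hu : ∀ i, u (i + 1) ≤ u i := by
    intro i
    have hdec' : |G (i + 3) - G (i + 2)| ≤ |G (i + 2) - G (i + 1)| := by
      have := hdec (i + 2) (by omega)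
      simpa using this
    have : min |G (i + 3) - G (i + 2)| (2 * b) ≤ min |G (i + 2) - G (i + 1)| (2 * b) :=
      min_le_min hdec' le_rfl
    exact max_le_max (by linarith) le_rfl
  -- eventually zero
  obtain ⟨N, hN⟩ := hfin.bddAbove
  have hzero : ∀ i, N ≤ i → u i = 0 := by
    intro i hi
    have hnotmem : (i + 2) ∉ {i : ℕ | 2 ≤ i ∧ G i ≠ G (i - 1)} := by
      intro hmem
      have := hN hmem
      omega
    have hGeq : G (i + 2) = G (i + 1) := by
      by_contra hne
      exact hnotmem ⟨by omega, by simpa using hne⟩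
    simp only [hu_def, hGeq, sub_self, abs_zero]
    have : min (0 : ℝ) (2 * b) = 0 := min_eq_left (by linarith)
    rw [this]
    exact max_eq_right (by linarith)
  -- finsum as finite sum
  have hsupp : Function.support (fun i => (-1 : ℝ) ^ (i + 1) * u i) ⊆
      ↑(Finset.range N) := by
    intro i hi
    simp only [Finset.coe_range, Set.mem_Iio]
    by_contra h
    push_neg at h
    have := hzero i h
    simp [Function.mem_support, this] at hi
  have hfs : ∑ᶠ i : ℕ, (-1 : ℝ) ^ (i + 1) *
        max (min |G (i + 2) - G (i + 1)| (2 * b) - 2 * a) 0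
      = ∑ i ∈ Finset.range N, (-1 : ℝ) ^ (i + 1) * u i :=
    finsum_eq_sum_of_support_subset _ hsupp
  -- bounds on the alternating sum
  obtain ⟨hS1, hS2⟩ := alt_sum_bound u hu hnn N
  set S := ∑ i ∈ Finset.range N, (-1 : ℝ) ^ (i + 1) * u i with hS_def
  -- first term bounds
  set t : ℝ := max (min (G 1) b - a) 0 with ht_def
  have ht0 : 0 ≤ t := le_max_right _ _
  have htb : t ≤ b - a := by
    apply max_le _ (by linarith)
    have : min (G 1) b ≤ b := min_le_right _ _
    linarith
  have hu0 : u 0 ≤ 2 * t := by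
    have h1 : min |G 2 - G 1| (2 * b) ≤ min (2 * G 1) (2 * b) := min_le_min h2 le_rfl
    have h3 : min (2 * G 1) (2 * b) = 2 * min (G 1) b := by
      rcases le_total (G 1) b with h | h
      · rw [min_eq_left (by linarith), min_eq_left h]
      · rw [min_eq_right (by linarith), min_eq_right h]
    have h4 : min (G 1) b - a ≤ t := le_max_left _ _
    apply max_le _ (by linarith)
    simp only [hu_def] at *
    nlinarith [h1, h3, h4]
  rw [hfs]
  rw [abs_le]
  constructor <;> nlinarith
end
end

section
/- Rate-independence of the multidimensional stop (Moreau sweeping) process: let V be a finite-dimensional real inner product space, Z ⊆ V closed convex with 0 ∈ Z, f_0 ∈ V, and let u : [0,T] → V be an absolutely continuous solution of the multidimensional stop inclusion with absolutely continuous input g : [0,T] → ℝ, g(0) = 0. If τ : [0,T'] → [0,T] is nondecreasing, absolutely continuous, with τ(0) = 0 and τ(T') = T, then u ∘ τ is absolutely continuous and is a solution of the multidimensional stop inclusion with input g ∘ τ: (u∘τ)(0) = 0, (u∘τ)(s) ∈ Z for all s, and −(u∘τ)'(s) + f_0 (g∘τ)'(s) ∈ N_Z(u(τ(s))) for a.e.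 s ∈ [0,T']. -/
open MeasureTheory Set Filter Metric
open scoped Topology ENNReal NNReal

noncomputable section

/-- Outward normal cone to a convex set `Z` at `z`. -/
def normalCone {V : Type*} [NormedAddCommGroup V] [InnerProductSpace ℝ V]
    (Z : Set V) (z : V) : Set V :=
  {y | ∀ z' ∈ Z, 0 ≤ (inner ℝ y (z - z') : ℝ)}

/-- `u` is absolutely continuous on `[0,T]` with a.e. derivative `u'`
(encoded via the integral representation). -/
def IsACOn {W : Type*} [NormedAddCommGroup W] [NormedSpace ℝ W]
    (T : ℝ) (u u' : ℝ → W) : Prop :=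
  IntervalIntegrable u' volume 0 T ∧
    ∀ t ∈ Icc (0 : ℝ) T, u t = u 0 + ∫ s in (0:ℝ)..t, u' s

/-- Solution of the multidimensional stop inclusion on `[0,T]` with
characteristic convex set `Z`, direction `f0`, and an input whose a.e.
derivative is `g'`. -/
def IsStopSol {V : Type*} [NormedAddCommGroup V] [InnerProductSpace ℝ V]
    (Z : Set V) (f0 : V) (T : ℝ) (g' : ℝ → ℝ) (u u' : ℝ → V) : Prop :=
  IsACOn T u u' ∧ u 0 = 0 ∧ (∀ t ∈ Icc (0 : ℝ) T, u t ∈ Z) ∧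
    ∀ᵐ t ∂(volume.restrict (Icc (0 : ℝ) T)),
      -u' t + g' t • f0 ∈ normalCone Z (u t)

/-- A face of a polytope `Z`: `Z` itself or the intersection of `Z` with a
supporting hyperplane. -/
def IsPolyFace {V : Type*} [NormedAddCommGroup V] [InnerProductSpace ℝ V]
    (Z F : Set V) : Prop :=
  F = Z ∨ ∃ (n : V) (cc : ℝ), (∀ x ∈ Z, (inner ℝ n x : ℝ) ≤ cc) ∧
    F = {x ∈ Z | (inner ℝ n x : ℝ) = cc}

/-- If all interval integrals of `f` over subintervals of `[0,L]` are nonnegative,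
then `f` is a.e. nonnegative on `(0,L]`. -/
lemma aux_ae_nonneg {L : ℝ} {f : ℝ → ℝ}
    (hi : IntegrableOn f (Ioc 0 L) volume)
    (hnn : ∀ a b : ℝ, 0 ≤ a → a ≤ b → b ≤ L → 0 ≤ ∫ x in a..b, f x) :
    0 ≤ᵐ[volume.restrict (Ioc 0 L)] f := by
  set F : ℝ → ℝ := indicator (Ioc 0 L) f with hF
  have hFi : Integrable F volume := hi.integrable_indicator measurableSet_Ioc
  have hFl : LocallyIntegrable F volume := hFi.locallyIntegrable
  have hG : ∀ᵐ x ∂(volume : Measure ℝ), x ∈ Ioo 0 L → 0 ≤ f x := by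
    filter_upwards [IsUnifLocDoublingMeasure.ae_tendsto_average
      (volume : Measure ℝ) hFl 1] with x hx hxI
    have hT : Tendsto (fun r => ⨍ y in closedBall x r, F y) (𝓝[>] (0:ℝ)) (𝓝 (F x)) := by
      refine hx (fun _ => x) id tendsto_id ?_
      filter_upwards [self_mem_nhdsWithin] with r hr
      have : (0:ℝ) ≤ r := le_of_lt hr
      simp [Metric.mem_closedBall, dist_self]; linarith
    have hε : (0:ℝ) < min x (L - x) := lt_min hxI.1 (by linarith [hxI.2])
    have hev : ∀ᶠ r in 𝓝[>] (0:ℝ), 0 ≤ ⨍ y in closedBall x r, F y := by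
      filter_upwards [Ioo_mem_nhdsGT_of_mem (left_mem_Ico.2 hε)] with r hr
      have hr0 : 0 < r := hr.1
      have hrx : r < x := lt_of_lt_of_le hr.2 (min_le_left _ _)
      have hrL : x + r ≤ L := by
        have := hr.2.trans_le (min_le_right _ _); linarith
      have hsub : Icc (x - r) (x + r) ⊆ Ioc 0 L := fun y hy =>
        ⟨by linarith [hy.1], by linarith [hy.2]⟩
      have h1 : ∫ y in closedBall x r, F y = ∫ y in x - r..x + r, f y := by
        rw [Real.closedBall_eq_Icc]
        rw [setIntegral_congr_fun measurableSet_Icc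
          (fun y hy => indicator_of_mem (hsub hy) f)]
        rw [integral_Icc_eq_integral_Ioc, intervalIntegral.integral_of_le (by linarith)]
      rw [setAverage_eq, h1, smul_eq_mul]
      have := hnn (x - r) (x + r) (by linarith) (by linarith) hrL
      positivity
    have h0 : 0 ≤ F x := ge_of_tendsto hT hev
    rwa [hF, indicator_of_mem (Ioo_subset_Ioc_self hxI)] at h0
  rw [← Measure.restrict_congr_set Ioo_ae_eq_Ioc]
  exact (ae_restrict_iff' measurableSet_Ioo).2 hG

/-- Rate-independence of the multidimensional stop (Moreau sweeping) process:
composing a solution with a nondecreasing absolutely continuous time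
transformation yields a solution for the correspondingly transformed input. -/
theorem stop_rate_independent
    {V : Type*} [NormedAddCommGroup V] [InnerProductSpace ℝ V] [FiniteDimensional ℝ V]
    (Z : Set V) (hZcl : IsClosed Z) (hZconv : Convex ℝ Z) (h0Z : (0 : V) ∈ Z)
    (f0 : V) (T : ℝ) (hT : 0 < T)
    (g g' : ℝ → ℝ) (hg : IsACOn T g g') (hg0 : g 0 = 0)
    (u u' : ℝ → V) (hu : IsStopSol Z f0 T g' u u')
    (T' : ℝ) (hT' : 0 < T') (τ τ' : ℝ → ℝ) (hτ : IsACOn T' τ τ')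
    (hτm : MonotoneOn τ (Icc 0 T')) (hτ0 : τ 0 = 0) (hτT : τ T' = T) :
    IsStopSol Z f0 T' (fun s => g' (τ s) * τ' s) (u ∘ τ)
      (fun s => τ' s • u' (τ s)) := by
  obtain ⟨hτ'i, hτrep⟩ := hτ
  obtain ⟨⟨hu'i, hurep⟩, hu0, huZ, huae⟩ := hu
  have hT0 : (0:ℝ) ≤ T := hT.le
  have hT'0 : (0:ℝ) ≤ T' := hT'.le
  have hτ'Ioc : IntegrableOn τ' (Ioc 0 T') volume :=
    (intervalIntegrable_iff_integrableOn_Ioc_of_le hT'0).1 hτ'i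
  have hu'Ioc : IntegrableOn u' (Ioc 0 T) volume :=
    (intervalIntegrable_iff_integrableOn_Ioc_of_le hT0).1 hu'i
  -- measurable versions of the derivatives
  set ψ : ℝ → ℝ := hτ'Ioc.aestronglyMeasurable.mk τ' with hψdef
  have hψm : StronglyMeasurable ψ := hτ'Ioc.aestronglyMeasurable.stronglyMeasurable_mk
  have hψae : τ' =ᵐ[volume.restrict (Ioc 0 T')] ψ := hτ'Ioc.aestronglyMeasurable.ae_eq_mk
  set φ : ℝ → V := hu'Ioc.aestronglyMeasurable.mk u' with hφdef
  have hφm : StronglyMeasurable φ := hu'Ioc.aestronglyMeasurable.stronglyMeasurable_mk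
  have hφae : u' =ᵐ[volume.restrict (Ioc 0 T)] φ := hu'Ioc.aestronglyMeasurable.ae_eq_mk
  have hψIoc : IntegrableOn ψ (Ioc 0 T') volume := hτ'Ioc.congr hψae
  -- basic facts about τ
  have hmem : ∀ s ∈ Icc (0:ℝ) T', τ s ∈ Icc (0:ℝ) T := fun s hs =>
    ⟨hτ0 ▸ hτm (left_mem_Icc.2 hT'0) hs hs.1, hτT ▸ hτm hs (right_mem_Icc.2 hT'0) hs.2⟩
  have hτcont : ContinuousOn τ (Icc 0 T') := by
    have h1 : ContinuousOn (fun b => ∫ x in (0:ℝ)..b, τ' x) (uIcc 0 T') :=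
      intervalIntegral.continuousOn_primitive_interval' hτ'i left_mem_uIcc
    rw [uIcc_of_le hT'0] at h1
    exact (continuousOn_const.add h1).congr fun s hs => hτrep s hs
  -- interval integrals of ψ compute increments of τ
  have hψint : ∀ a b : ℝ, 0 ≤ a → a ≤ b → b ≤ T' → ∫ x in a..b, ψ x = τ b - τ a := by
    intro a b ha hab hbL
    have hsub : Set.uIoc a b ⊆ Ioc 0 T' := by
      rw [uIoc_of_le hab]
      exact Ioc_subset_Ioc ha hbL
    have hψτ : ∫ x in a..b, ψ x = ∫ x in a..b, τ' x := by
      refine intervalIntegral.integral_congr_ae ?_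
      filter_upwards [(ae_restrict_iff' measurableSet_Ioc).1 hψae] with x hx hxI
      exact (hx (hsub hxI)).symm
    have hIb : IntervalIntegrable τ' volume 0 b := hτ'i.mono_set' (by
      rw [uIoc_of_le (ha.trans hab), uIoc_of_le hT'0]
      exact Ioc_subset_Ioc le_rfl hbL)
    have hIa : IntervalIntegrable τ' volume 0 a := hτ'i.mono_set' (by
      rw [uIoc_of_le ha, uIoc_of_le hT'0]
      exact Ioc_subset_Ioc le_rfl (hab.trans hbL))
    have e1 := hτrep a ⟨ha, hab.trans hbL⟩
    have e2 := hτrep b ⟨ha.trans hab, hbL⟩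
    have e3 := intervalIntegral.integral_interval_sub_left hIb hIa
    rw [hψτ]
    linarith
  -- ψ is a.e. nonnegative
  have hψnn : 0 ≤ᵐ[volume.restrict (Ioc 0 T')] ψ := by
    apply aux_ae_nonneg hψIoc
    intro a b ha hab hbL
    rw [hψint a b ha hab hbL]
    exact sub_nonneg.2 (hτm ⟨ha, hab.trans hbL⟩ ⟨ha.trans hab, hbL⟩ hab)
  -- the clamped time transformation
  set c : ℝ → ℝ := fun s => max 0 (min s T') with hcdef
  have hc_mem : ∀ s, c s ∈ Icc (0:ℝ) T' := fun s =>
    ⟨le_max_left _ _, max_le hT'0 (min_le_right _ _)⟩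
  have hc_of_mem : ∀ s ∈ Icc (0:ℝ) T', c s = s := fun s hs => by
    simp only [hcdef, min_eq_left hs.2, max_eq_right hs.1]
  have hc_cont : Continuous c := continuous_const.max (continuous_id.min continuous_const)
  have hc_mono : Monotone c := fun a b hab => max_le_max le_rfl (min_le_min hab le_rfl)
  set τt : ℝ → ℝ := fun s => τ (c s) with hτtdef
  have hτt_eq : ∀ s ∈ Icc (0:ℝ) T', τt s = τ s := fun s hs => by
    rw [hτtdef]; exact congrArg τ (hc_of_mem s hs)
  have hτtc : Continuous τt := hτcont.comp_continuous hc_cont hc_mem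
  have hτtm : Monotone τt := fun a b hab => hτm (hc_mem a) (hc_mem b) (hc_mono hab)
  have hτt_mem : ∀ s, τt s ∈ Icc (0:ℝ) T := fun s => hmem _ (hc_mem s)
  have hτt0 : τt 0 = 0 := by
    rw [hτt_eq 0 (left_mem_Icc.2 hT'0)]; exact hτ0
  have hτtT' : ∀ s, T' ≤ s → τt s = T := by
    intro s hs
    have : c s = T' := by
      simp only [hcdef, min_eq_right hs, max_eq_right hT'0]
    rw [hτtdef]; simp only [this]; exact hτT
  -- the pulled-back measure
  set δn : ℝ → ℝ≥0 := fun σ => Real.toNNReal (ψ σ) with hδdef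
  have hδm : Measurable δn := measurable_real_toNNReal.comp hψm.measurable
  have hδEm : Measurable fun σ => (δn σ : ℝ≥0∞) := hδm.coe_nnreal_ennreal
  set ν : Measure ℝ := (volume.restrict (Ioc 0 T')).withDensity
    (fun σ => (δn σ : ℝ≥0∞)) with hνdef
  have hδE : ∀ σ, (δn σ : ℝ≥0∞) = ENNReal.ofReal (ψ σ) := fun σ => rfl
  have hν_apply : ∀ s : Set ℝ, MeasurableSet s →
      ν s = ∫⁻ x in s ∩ Ioc 0 T', ENNReal.ofReal (ψ x) := by
    intro s hs
    rw [hνdef, withDensity_apply _ hs, Measure.restrict_restrict hs]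
    rfl
  have hν_calc : ∀ a b : ℝ, 0 ≤ a → a ≤ b → b ≤ T' →
      ∫⁻ x in Ioc a b, ENNReal.ofReal (ψ x) = ENNReal.ofReal (τ b - τ a) := by
    intro a b ha hab hbL
    have hint : IntegrableOn ψ (Ioc a b) volume :=
      hψIoc.mono_set (Ioc_subset_Ioc ha hbL)
    have hnnb : 0 ≤ᵐ[volume.restrict (Ioc a b)] ψ :=
      ae_restrict_of_ae_restrict_of_subset (Ioc_subset_Ioc ha hbL) hψnn
    rw [← ofReal_integral_eq_lintegral_ofReal hint hnnb, ← intervalIntegral.integral_of_le hab,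
      hψint a b ha hab hbL]
  have hν_Iic : ∀ b ∈ Icc (0:ℝ) T', ν (Iic b) = ENNReal.ofReal (τ b) := by
    intro b hb
    rw [hν_apply _ measurableSet_Iic]
    have hset : Iic b ∩ Ioc 0 T' = Ioc 0 b := by
      ext x
      simp only [mem_inter_iff, mem_Iic, mem_Ioc]
      exact ⟨fun h => ⟨h.2.1, h.1⟩, fun h => ⟨h.2, h.1, h.2.trans hb.2⟩⟩
    rw [hset, hν_calc 0 b le_rfl hb.1 hb.2, hτ0, sub_zero]
  have hν_univ : ν univ = ENNReal.ofReal T := by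
    rw [hν_apply _ MeasurableSet.univ, univ_inter, hν_calc 0 T' le_rfl hT'0 le_rfl,
      hτT, hτ0, sub_zero]
  have hνfin : IsFiniteMeasure ν := ⟨by rw [hν_univ]; exact ENNReal.ofReal_lt_top⟩
  -- the key pushforward identity
  have hM : ν.map τt = volume.restrict (Ioc 0 T) := by
    haveI := hνfin
    haveI : IsFiniteMeasure (ν.map τt) := Measure.isFiniteMeasure_map ν τt
    refine Measure.ext_of_Iic (ν.map τt) _ fun d => ?_
    rw [Measure.map_apply hτtc.measurable measurableSet_Iic,
      Measure.restrict_apply measurableSet_Iic]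
    rcases lt_or_ge d 0 with hd | hd
    · have h1 : τt ⁻¹' Iic d = ∅ := by
        apply eq_empty_iff_forall_notMem.2
        intro s hs
        exact absurd (le_trans (hτt_mem s).1 hs) (not_le.2 hd)
      have h2 : Iic d ∩ Ioc 0 T = ∅ := by
        apply eq_empty_iff_forall_notMem.2
        rintro x ⟨hx1, hx2, _⟩
        exact absurd (hx2.trans_le hx1) (not_lt.2 hd.le)
      rw [h1, h2]; simp
    rcases lt_or_ge d T with hdT | hdT
    · set S := {s : ℝ | τt s ≤ d} with hSdef
      have hne : (0:ℝ) ∈ S := by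
        simp only [hSdef, mem_setOf_eq, hτt0]; exact hd
      have hSb : ∀ s ∈ S, s < T' := by
        intro s hs
        by_contra h
        push_neg at h
        rw [hSdef, mem_setOf_eq, hτtT' s h] at hs
        exact absurd (lt_of_le_of_lt hs hdT) (lt_irrefl T)
      have hbdd : BddAbove S := ⟨T', fun s hs => (hSb s hs).le⟩
      have hScl : IsClosed S := isClosed_Iic.preimage hτtc
      set b := sSup S with hbdef
      have hbS : b ∈ S := hScl.csSup_mem ⟨0, hne⟩ hbdd
      have hb0 : 0 ≤ b := le_csSup hbdd hne
      have hbT' : b < T' := hSb b hbS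
      have hSIic : τt ⁻¹' Iic d = Iic b := by
        ext s
        constructor
        · intro hs; exact le_csSup hbdd hs
        · intro hs; exact le_trans (hτtm hs) hbS
      have hτb : τt b = d := by
        have hbd : τt b ≤ d := hbS
        rcases lt_or_eq_of_le hbd with hlt | heq
        · exfalso
          have hev : ∀ᶠ y in 𝓝[>] b, τt y < d :=
            (hτtc.continuousAt.eventually_lt continuousAt_const hlt).filter_mono
              nhdsWithin_le_nhds
          obtain ⟨y, hy1, hy2⟩ := (hev.and self_mem_nhdsWithin).exists
          exact absurd (le_csSup hbdd hy1.le) (not_le.2 hy2)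
        · exact heq
      rw [hSIic, hν_Iic b ⟨hb0, hbT'.le⟩, ← hτt_eq b ⟨hb0, hbT'.le⟩, hτb]
      have hset : Iic d ∩ Ioc 0 T = Ioc 0 d := by
        ext x
        simp only [mem_inter_iff, mem_Iic, mem_Ioc]
        exact ⟨fun h => ⟨h.2.1, h.1⟩, fun h => ⟨h.2, h.1, h.2.trans hdT.le⟩⟩
      rw [hset, Real.volume_Ioc, sub_zero]
    · have h1 : τt ⁻¹' Iic d = univ := by
        apply eq_univ_of_forall
        intro s
        exact le_trans (hτt_mem s).2 hdT
      have h2 : Iic d ∩ Ioc 0 T = Ioc 0 T :=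
        inter_eq_self_of_subset_right fun x hx => le_trans hx.2 hdT
      rw [h1, h2, hν_univ, Real.volume_Ioc, sub_zero]
  -- null sets in the target pull back to sets where ψ vanishes a.e.
  have hpull : ∀ N : Set ℝ, MeasurableSet N → volume N = 0 →
      ∀ᵐ σ ∂(volume.restrict (Ioc 0 T')), τt σ ∈ N → ψ σ ≤ 0 := by
    intro N hNm hN0
    have h1 : ν (τt ⁻¹' N) = 0 := by
      rw [← Measure.map_apply hτtc.measurable hNm, hM, Measure.restrict_apply hNm]
      exact measure_mono_null inter_subset_left hN0
    rw [hνdef, withDensity_apply _ (hNm.preimage hτtc.measurable)] at h1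
    have h2 := (setLIntegral_eq_zero_iff (hNm.preimage hτtc.measurable) hδEm).1 h1
    filter_upwards [h2] with σ hσ hmemN
    have h3 : (δn σ : ℝ≥0∞) = 0 := hσ hmemN
    rw [ENNReal.coe_eq_zero, hδdef] at h3
    exact Real.toNNReal_eq_zero.1 h3
  -- extract literal null sets from the a.e. hypotheses
  have hext : ∀ (A : Set ℝ) (p : ℝ → Prop), MeasurableSet A →
      (∀ᵐ t ∂volume.restrict A, p t) →
      ∃ N : Set ℝ, MeasurableSet N ∧ volume N = 0 ∧ ∀ t ∈ A, t ∉ N → p t := by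
    intro A p hA hp
    have hB : (volume.restrict A) {t | ¬ p t} = 0 := ae_iff.1 hp
    refine ⟨toMeasurable (volume.restrict A) {t | ¬ p t} ∩ A,
      (measurableSet_toMeasurable _ _).inter hA, ?_, ?_⟩
    · have h1 : (volume.restrict A) (toMeasurable (volume.restrict A) {t | ¬ p t}) = 0 := by
        rw [measure_toMeasurable]; exact hB
      rwa [Measure.restrict_apply (measurableSet_toMeasurable _ _)] at h1
    · intro t ht htN
      by_contra hnp
      exact htN ⟨subset_toMeasurable _ _ hnp, ht⟩
  obtain ⟨Nu, hNum, hNu0, hNueq⟩ :=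
    hext (Ioc 0 T) (fun t => u' t = φ t) measurableSet_Ioc hφae
  obtain ⟨Np, hNpm, hNp0, hNpP⟩ :=
    hext (Icc 0 T) (fun t => -u' t + g' t • f0 ∈ normalCone Z (u t)) measurableSet_Icc huae
  -- key a.e. equality between the target integrand and its measurable version
  have hK : (fun σ => τ' σ • u' (τ σ)) =ᵐ[volume.restrict (Ioc 0 T')]
      (fun σ => ψ σ • φ (τt σ)) := by
    have hbadm : MeasurableSet (Nu ∪ ({0} ∪ {T} : Set ℝ)) :=
      hNum.union ((measurableSet_singleton 0).union (measurableSet_singleton T))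
    have hbad0 : volume (Nu ∪ ({0} ∪ {T} : Set ℝ)) = 0 := by
      rw [measure_union_null_iff, measure_union_null_iff]
      exact ⟨hNu0, measure_singleton 0, measure_singleton T⟩
    filter_upwards [hpull _ hbadm hbad0, hψae, hψnn,
      ae_restrict_mem measurableSet_Ioc] with σ hσ hψeq hψ0 hσmem
    have hτeq : τt σ = τ σ := hτt_eq σ (Ioc_subset_Icc_self hσmem)
    by_cases hcase : τt σ ∈ Nu ∪ ({0} ∪ {T} : Set ℝ)
    · have h0 : ψ σ = 0 := le_antisymm (hσ hcase) hψ0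
      show τ' σ • u' (τ σ) = ψ σ • φ (τt σ)
      rw [hψeq, h0, zero_smul, zero_smul]
    · simp only [mem_union, mem_singleton_iff, not_or] at hcase
      have h1 : τt σ ∈ Ioc 0 T := by
        rcases hτt_mem σ with ⟨h0, hT1⟩
        exact ⟨lt_of_le_of_ne h0 (Ne.symm hcase.2.1), hT1⟩
      have h2 : u' (τt σ) = φ (τt σ) := hNueq _ h1 hcase.1
      show τ' σ • u' (τ σ) = ψ σ • φ (τt σ)
      rw [hψeq, ← hτeq, h2]
  -- integrability of the transformed derivative
  have hφτm : StronglyMeasurable fun σ => φ (τt σ) :=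
    hφm.comp_measurable hτtc.measurable
  have hHsm : StronglyMeasurable fun σ => ψ σ • φ (τt σ) := hψm.smul hφτm
  have hfin : ∫⁻ σ in Ioc 0 T', (‖ψ σ • φ (τt σ)‖₊ : ℝ≥0∞) ∂volume < ⊤ := by
    have step1 : ∫⁻ σ in Ioc 0 T', (‖ψ σ • φ (τt σ)‖₊ : ℝ≥0∞) ∂volume
        = ∫⁻ σ, ((fun x => (δn x : ℝ≥0∞)) * fun x => (‖φ (τt x)‖₊ : ℝ≥0∞)) σ
            ∂(volume.restrict (Ioc 0 T')) := by
      refine lintegral_congr_ae ?_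
      filter_upwards [hψnn] with σ h0
      simp only [Pi.mul_apply, hδE, nnnorm_smul, ENNReal.coe_mul,
        ]
      exact congrArg (· * _) (Real.enorm_eq_ofReal h0)
    rw [step1, ← lintegral_withDensity_eq_lintegral_mul _ hδEm hφτm.nnnorm.measurable.coe_nnreal_ennreal, ← hνdef,
      ← lintegral_map hφm.nnnorm.measurable.coe_nnreal_ennreal hτtc.measurable, hM]
    have step2 : ∫⁻ t in Ioc 0 T, (‖φ t‖₊ : ℝ≥0∞) ∂volume
        = ∫⁻ t in Ioc 0 T, (‖u' t‖₊ : ℝ≥0∞) ∂volume := by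
      refine lintegral_congr_ae ?_
      filter_upwards [hφae] with t ht
      rw [ht]
    rw [step2]
    exact hu'Ioc.2
  have hInt : IntegrableOn (fun σ => ψ σ • φ (τt σ)) (Ioc 0 T') volume :=
    ⟨hHsm.aestronglyMeasurable, hfin⟩
  have hIntTarget : IntegrableOn (fun σ => τ' σ • u' (τ σ)) (Ioc 0 T') volume :=
    hInt.congr hK.symm
  have hTargetII : IntervalIntegrable (fun σ => τ' σ • u' (τ σ)) volume 0 T' :=
    (intervalIntegrable_iff_integrableOn_Ioc_of_le hT'0).2 hIntTarget
  -- the integral representation of `u ∘ τ`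
  have hrepComp : ∀ s ∈ Icc (0:ℝ) T',
      u (τ s) = u 0 + ∫ σ in (0:ℝ)..s, τ' σ • u' (τ σ) := by
    intro s hs
    have hτs := hmem s hs
    rw [hurep (τ s) hτs]
    congr 1
    rw [intervalIntegral.integral_of_le hτs.1, intervalIntegral.integral_of_le hs.1]
    set G : ℝ → V := (Ioc 0 (τ s)).indicator φ with hGdef
    have hGsm : StronglyMeasurable G := hφm.indicator measurableSet_Ioc
    have l1 : ∫ t in Ioc 0 (τ s), u' t = ∫ t in Ioc 0 (τ s), φ t := by
      refine setIntegral_congr_ae measurableSet_Ioc ?_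
      filter_upwards [(ae_restrict_iff' measurableSet_Ioc).1 hφae] with t ht htI
      exact ht (Ioc_subset_Ioc le_rfl hτs.2 htI)
    have l2 : ∫ t in Ioc 0 (τ s), φ t = ∫ t in Ioc 0 T, G t := by
      rw [hGdef, integral_indicator measurableSet_Ioc,
        Measure.restrict_restrict measurableSet_Ioc,
        inter_eq_self_of_subset_left (Ioc_subset_Ioc le_rfl hτs.2)]
    have l3 : ∫ t in Ioc 0 T, G t = ∫ σ, G (τt σ) ∂ν := by
      rw [← hM]
      exact integral_map hτtc.measurable.aemeasurable hGsm.aestronglyMeasurable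
    have l4 : ∫ σ, G (τt σ) ∂ν
        = ∫ σ in Ioc 0 T', δn σ • G (τt σ) ∂volume := by
      rw [hνdef]
      exact integral_withDensity_eq_integral_smul hδm _
    have l5 : ∫ σ in Ioc 0 T', δn σ • G (τt σ) ∂volume
        = ∫ σ in Ioc 0 T', (Ioc 0 s).indicator (fun σ' => ψ σ' • φ (τt σ')) σ ∂volume := by
      have hbadm : MeasurableSet ({0, τ s} : Set ℝ) :=
        (Set.toFinite ({0, τ s} : Set ℝ)).measurableSet
      have hbad0 : volume ({0, τ s} : Set ℝ) = 0 := by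
        have : ({0, τ s} : Set ℝ) = {0} ∪ {τ s} := rfl
        rw [this, measure_union_null_iff]
        exact ⟨measure_singleton 0, measure_singleton (τ s)⟩
      refine integral_congr_ae ?_
      filter_upwards [hpull _ hbadm hbad0, hψnn,
        ae_restrict_mem measurableSet_Ioc] with σ hσ hψ0 hσmem
      have hσIcc : σ ∈ Icc (0:ℝ) T' := Ioc_subset_Icc_self hσmem
      have hτeq : τt σ = τ σ := hτt_eq σ hσIcc
      rcases eq_or_lt_of_le hψ0 with h0 | hpos
      · by_cases hmem2 : σ ∈ Ioc 0 s
        · simp [hGdef, indicator_of_mem hmem2, hδdef, ← h0, NNReal.smul_def]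
        · simp [hδdef, ← h0, indicator_of_notMem hmem2]
      · have hbadc : τt σ ∉ ({0, τ s} : Set ℝ) := fun h => absurd (hσ h) (not_le.2 hpos)
        simp only [mem_insert_iff, mem_singleton_iff, not_or] at hbadc
        by_cases hle : σ ≤ s
        · have hσs : σ ∈ Ioc 0 s := ⟨hσmem.1, hle⟩
          have hτσ : τt σ ∈ Ioc 0 (τ s) := by
            refine ⟨lt_of_le_of_ne (hτt_mem σ).1 (Ne.symm hbadc.1), ?_⟩
            rw [hτeq]; exact hτm hσIcc hs hle
          rw [indicator_of_mem hσs, hGdef, indicator_of_mem hτσ, NNReal.smul_def, hδdef,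
            Real.coe_toNNReal _ hψ0]
        · push_neg at hle
          have hτσ : τt σ ∉ Ioc 0 (τ s) := by
            intro h
            have : τ s ≤ τt σ := by rw [hτeq]; exact hτm hs hσIcc hle.le
            exact hbadc.2 (le_antisymm h.2 this)
          rw [indicator_of_notMem (fun h : σ ∈ Ioc 0 s => absurd h.2 (not_le.2 hle)),
            hGdef, indicator_of_notMem hτσ, smul_zero]
    have l6 : ∫ σ in Ioc 0 T', (Ioc 0 s).indicator (fun σ' => ψ σ' • φ (τt σ')) σ ∂volume
        = ∫ σ in Ioc 0 s, ψ σ • φ (τt σ) ∂volume := by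
      rw [integral_indicator measurableSet_Ioc,
        Measure.restrict_restrict measurableSet_Ioc,
        inter_eq_self_of_subset_left (Ioc_subset_Ioc le_rfl hs.2)]
    have l7 : ∫ σ in Ioc 0 s, ψ σ • φ (τt σ) ∂volume
        = ∫ σ in Ioc 0 s, τ' σ • u' (τ σ) ∂volume := by
      refine setIntegral_congr_ae measurableSet_Ioc ?_
      have := (ae_restrict_iff' measurableSet_Ioc).1 hK
      filter_upwards [this] with σ hσ hσI
      exact (hσ (Ioc_subset_Ioc le_rfl hs.2 hσI)).symm
    rw [l1, l2, l3, l4, l5, l6, l7]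
  -- the differential inclusion for the composition
  have hae2 : ∀ᵐ σ ∂volume.restrict (Icc 0 T'),
      -(τ' σ • u' (τ σ)) + (g' (τ σ) * τ' σ) • f0 ∈ normalCone Z (u (τ σ)) := by
    rw [← Measure.restrict_congr_set Ioc_ae_eq_Icc]
    filter_upwards [hpull Np hNpm hNp0, hψae, hψnn,
      ae_restrict_mem measurableSet_Ioc] with σ hp hψeq hψ0 hσmem
    have hσIcc : σ ∈ Icc (0:ℝ) T' := Ioc_subset_Icc_self hσmem
    have hτeq : τt σ = τ σ := hτt_eq σ hσIcc
    have hτ'0 : 0 ≤ τ' σ := hψeq ▸ hψ0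
    rcases eq_or_lt_of_le hτ'0 with h0 | hpos
    · have hz : -(τ' σ • u' (τ σ)) + (g' (τ σ) * τ' σ) • f0 = 0 := by
        rw [← h0]; simp
      rw [hz]
      intro z' hz'
      simp [inner_zero_left]
    · have hτN : τ σ ∉ Np := by
        intro h
        have := hp (hτeq ▸ h : τt σ ∈ Np)
        rw [← hψeq] at this
        exact absurd this (not_le.2 hpos)
      have hP := hNpP (τ σ) (hmem σ hσIcc) hτN
      intro z' hz'
      have hin := hP z' hz'
      have hrw : -(τ' σ • u' (τ σ)) + (g' (τ σ) * τ' σ) • f0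
          = τ' σ • (-u' (τ σ) + g' (τ σ) • f0) := by
        rw [smul_add, smul_neg, smul_smul, mul_comm]
      rw [hrw, real_inner_smul_left]
      exact mul_nonneg hpos.le hin
  -- assemble the solution structure
  refine ⟨⟨hTargetII, ?_⟩, ?_, ?_, ?_⟩
  · intro t ht
    simp only [Function.comp_apply]
    rw [hτ0]
    exact hrepComp t ht
  · simp only [Function.comp_apply, hτ0, hu0]
  · intro t ht
    exact huZ (τ t) (hmem t ht)
  · filter_upwards [hae2] with σ hσ
    simpa using hσ

end
end

section
/- Normal cone under rescaling by a positive operator: let E be a finite-dimensional real inner product space, A : E → E a self-adjoint positive definite linear operator with positive square root A^{1/2}, and C ⊆ E a closed convex set. Then for all e, p ∈ E with A e ∈ C: p ∈ N_C(A e) if and only if A^{1/2} p ∈ N_{A^{−1/2}C}(A^{1/2} e), where A^{−1/2}C = {A^{−1/2}z : z ∈ C}. -/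
open MeasureTheory Set

noncomputable section

/-- Behaviour of the normal cone under rescaling by a positive self-adjoint
operator `A` with positive square root `B = A^{1/2}` (with inverse `Binv`):
`p ∈ N_C(Ae)` iff `A^{1/2}p ∈ N_{A^{-1/2}C}(A^{1/2}e)`. -/
theorem normalCone_rescaling
    {E : Type*} [NormedAddCommGroup E] [InnerProductSpace ℝ E] [FiniteDimensional ℝ E]
    (C : Set E) (hCcl : IsClosed C) (hCconv : Convex ℝ C)
    (A B Binv : E →ₗ[ℝ] E)
    (hAsa : ∀ x y : E, (inner ℝ (A x) y : ℝ) = (inner ℝ x (A y) : ℝ))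
    (hApos : ∀ x : E, x ≠ 0 → 0 < (inner ℝ (A x) x : ℝ))
    (hBsa : ∀ x y : E, (inner ℝ (B x) y : ℝ) = (inner ℝ x (B y) : ℝ))
    (hBpos : ∀ x : E, x ≠ 0 → 0 < (inner ℝ (B x) x : ℝ))
    (hBB : B.comp B = A)
    (hBi1 : Binv.comp B = LinearMap.id) (hBi2 : B.comp Binv = LinearMap.id)
    (e p : E) (he : A e ∈ C) :
    p ∈ normalCone C (A e) ↔ B p ∈ normalCone (Binv '' C) (B e) := by
  have key : ∀ z : E, (inner ℝ (B p) (B e - Binv z) : ℝ) = inner ℝ p (A e - z) := by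
    intro z
    have h1 : B (Binv z) = z := congrArg (fun f => f z) hBi2
    have h2 : B (B e) = A e := congrArg (fun f => f e) hBB
    rw [hBsa, map_sub, h1, h2]
  constructor
  · rintro h y ⟨z, hz, rfl⟩
    rw [key z]
    exact h z hz
  · intro h z hz
    have := h (Binv z) ⟨z, hz, rfl⟩
    rwa [key z] at this

end
end

section
/- Reduction of the Moreau system to a sweeping process: let E be a finite-dimensional real inner product space, V ⊆ E a linear subspace with orthogonal complement U = V^⊥, Π ⊆ E a closed convex set, f_0 ∈ V, and g : [0,T] → ℝ absolutely continuous. Suppose ξ, s : [0,T] → E are absolutely continuous, ξ(t) ∈ U for all t, s(t) ∈ (Π ∩ V) − f_0 g(t) for all t, and ξ'(t) − s'(t) ∈ N_{Π − f_0 g(t)}(s(t)) for a.e. t. Then −s'(t) ∈ N_{(Π ∩ V) − f_0 g(t)}(s(t)) for a.e. t. -/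
open MeasureTheory Set

noncomputable section

/-- If `h` is interval integrable on `[0,T]` and all its primitives from `0` vanish on `[0,T]`,
then `h` vanishes a.e. on `[0,T]`. -/
theorem aux_ae_zero {W : Type*} [NormedAddCommGroup W] [NormedSpace ℝ W] [CompleteSpace W]
    {T : ℝ} (hT : 0 < T) {h : ℝ → W}
    (hint : IntervalIntegrable h volume 0 T)
    (hzero : ∀ t ∈ Icc (0 : ℝ) T, (∫ s in (0:ℝ)..t, h s) = 0) :
    ∀ᵐ t ∂(volume.restrict (Icc (0 : ℝ) T)), h t = 0 := by
  set f : ℝ → W := (Icc (0:ℝ) T).indicator h with hf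
  have hIccInt : IntegrableOn h (Icc (0:ℝ) T) := by
    rw [integrableOn_Icc_iff_integrableOn_Ioc]
    exact (intervalIntegrable_iff_integrableOn_Ioc_of_le hT.le).mp hint
  have hf_int : Integrable f := (integrable_indicator_iff measurableSet_Icc).mpr hIccInt
  -- integral of `f` over any interval is zero
  have hkey : ∀ a b : ℝ, (∫ y in Icc a b, f y) = 0 := by
    intro a b
    rw [hf, setIntegral_indicator measurableSet_Icc, Icc_inter_Icc]
    rcases le_or_gt (a ⊔ 0) (b ⊓ T) with hab | hab
    · have h1 : a ⊔ 0 ∈ Icc (0:ℝ) T := ⟨le_max_right _ _, hab.trans (min_le_right _ _)⟩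
      have h2 : b ⊓ T ∈ Icc (0:ℝ) T := ⟨le_trans h1.1 hab, min_le_right _ _⟩
      have hi1 : IntervalIntegrable h volume 0 (a ⊔ 0) := by
        apply hint.mono_set
        rw [uIcc_of_le hT.le, uIcc_of_le h1.1]
        exact Icc_subset_Icc le_rfl h1.2
      have hi2 : IntervalIntegrable h volume 0 (b ⊓ T) := by
        apply hint.mono_set
        rw [uIcc_of_le hT.le, uIcc_of_le h2.1]
        exact Icc_subset_Icc le_rfl h2.2
      have := intervalIntegral.integral_interval_sub_left hi2 hi1
      rw [hzero _ h2, hzero _ h1, sub_zero] at this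
      rw [integral_Icc_eq_integral_Ioc, ← intervalIntegral.integral_of_le hab]
      exact this.symm
    · rw [Icc_eq_empty (not_le.mpr hab), Measure.restrict_empty, integral_zero_measure]
  -- Lebesgue differentiation
  have hloc : LocallyIntegrable f := hf_int.locallyIntegrable
  have := IsUnifLocDoublingMeasure.ae_tendsto_average (μ := (volume : Measure ℝ)) hloc 1
  have hae : ∀ᵐ x ∂(volume : Measure ℝ), f x = 0 := by
    filter_upwards [this] with x hx
    have h1 : Filter.Tendsto (id : ℝ → ℝ) (nhdsWithin 0 (Ioi 0)) (nhdsWithin 0 (Ioi 0)) :=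
      Filter.tendsto_id
    have h2 : ∀ᶠ j in nhdsWithin (0:ℝ) (Ioi 0), x ∈ Metric.closedBall x (1 * j) := by
      filter_upwards [self_mem_nhdsWithin] with j (hj : 0 < j)
      simpa using hj.le
    have h3 := hx (fun _ => x) id h1 h2
    have h4 : (fun j : ℝ => ⨍ y in Metric.closedBall x j, f y) =ᶠ[nhdsWithin (0:ℝ) (Ioi 0)]
        fun _ => (0 : W) := by
      filter_upwards with j
      rw [setAverage_eq, Real.closedBall_eq_Icc, hkey, smul_zero]
    have h5 : Filter.Tendsto (fun _ : ℝ => (0:W)) (nhdsWithin (0:ℝ) (Ioi 0)) (nhds (f x)) :=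
      Filter.Tendsto.congr' h4 h3
    exact (tendsto_nhds_unique tendsto_const_nhds h5).symm
  have : ∀ᵐ t ∂(volume.restrict (Icc (0:ℝ) T)), f t = 0 := ae_restrict_of_ae hae
  filter_upwards [this, indicator_ae_eq_restrict (f := h) (μ := volume) measurableSet_Icc]
    with t h1 h2
  rw [← h2]; exact h1


/-- Reduction of the Moreau system to a sweeping process: if `ξ(t) ∈ U = V^⊥`,
`s(t) ∈ (Π ∩ V) - f₀ g(t)` and `ξ' - s' ∈ N_{Π - f₀ g(t)}(s)` a.e., then
`-s' ∈ N_{(Π ∩ V) - f₀ g(t)}(s)` a.e. -/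
theorem moreau_reduction_to_sweeping
    {E : Type*} [NormedAddCommGroup E] [InnerProductSpace ℝ E] [FiniteDimensional ℝ E]
    (Vs : Submodule ℝ E) (Pi0 : Set E) (hPicl : IsClosed Pi0) (hPiconv : Convex ℝ Pi0)
    (f0 : E) (hf0 : f0 ∈ Vs)
    (T : ℝ) (hT : 0 < T) (g g' : ℝ → ℝ) (hg : IsACOn T g g')
    (ξ ξ' s s' : ℝ → E) (hξ : IsACOn T ξ ξ') (hs : IsACOn T s s')
    (hξU : ∀ t ∈ Icc (0 : ℝ) T, ξ t ∈ Vsᗮ)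
    (hsZ : ∀ t ∈ Icc (0 : ℝ) T,
      s t ∈ (fun x => x - g t • f0) '' (Pi0 ∩ ↑Vs))
    (hincl : ∀ᵐ t ∂(volume.restrict (Icc (0 : ℝ) T)),
      ξ' t - s' t ∈ normalCone ((fun x => x - g t • f0) '' Pi0) (s t)) :
    ∀ᵐ t ∂(volume.restrict (Icc (0 : ℝ) T)),
      -s' t ∈ normalCone ((fun x => x - g t • f0) '' (Pi0 ∩ ↑Vs)) (s t) := by
  classical
  -- The projection onto `Vs`, as a continuous linear map `E → E`.
  set P : E →L[ℝ] E := Vs.subtypeL.comp (Submodule.orthogonalProjectionOnto Vs) with hP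
  have hPzero : ∀ x ∈ Vsᗮ, P x = 0 := by
    intro x hx
    simp [hP, Submodule.orthogonalProjectionOnto_apply_of_mem_orthogonal hx]
  have hPint : IntervalIntegrable (fun u => P (ξ' u)) volume 0 T :=
    ⟨P.integrable_comp hξ.1.1, P.integrable_comp hξ.1.2⟩
  have hPprim : ∀ t ∈ Icc (0 : ℝ) T, (∫ u in (0:ℝ)..t, P (ξ' u)) = 0 := by
    intro t ht
    have hii : IntervalIntegrable ξ' volume 0 t := by
      apply hξ.1.mono_set
      rw [uIcc_of_le hT.le, uIcc_of_le ht.1]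
      exact Icc_subset_Icc le_rfl ht.2
    rw [P.intervalIntegral_comp_comm hii]
    have h0 : ξ 0 = ξ 0 + ∫ s in (0:ℝ)..(0:ℝ), ξ' s := by simp
    have hrep := hξ.2 t ht
    have : (∫ s in (0:ℝ)..t, ξ' s) = ξ t - ξ 0 := by rw [hrep]; abel
    rw [this, map_sub, hPzero _ (hξU t ht), hPzero _ (hξU 0 (left_mem_Icc.mpr hT.le)),
      sub_zero]
  have hPae : ∀ᵐ t ∂(volume.restrict (Icc (0 : ℝ) T)), P (ξ' t) = 0 :=
    aux_ae_zero hT hPint hPprim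
  have hperp : ∀ᵐ t ∂(volume.restrict (Icc (0 : ℝ) T)), ξ' t ∈ Vsᗮ := by
    filter_upwards [hPae] with t h
    have : (Submodule.orthogonalProjectionOnto Vs (ξ' t) : E) = 0 := h
    rw [← Submodule.coe_zero (p := Vs)] at this
    exact Submodule.orthogonalProjectionOnto_eq_zero_iff.mp (Subtype.coe_injective this)
  filter_upwards [hincl, hperp, ae_restrict_mem measurableSet_Icc] with t h1 h2 ht
  intro z' hz'
  obtain ⟨p, ⟨hpPi, hpV⟩, rfl⟩ := hz'
  obtain ⟨q, ⟨hqPi, hqV⟩, hq⟩ := hsZ t ht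
  have hst : s t = q - g t • f0 := hq.symm
  have key1 : 0 ≤ (inner ℝ (ξ' t - s' t) (s t - (p - g t • f0)) : ℝ) :=
    h1 _ ⟨p, hpPi, rfl⟩
  have hmem : s t - (p - g t • f0) ∈ Vs := by
    have : s t - (p - g t • f0) = q - p := by rw [hst]; abel
    rw [this]
    exact Vs.sub_mem hqV hpV
  have key2 : (inner ℝ (ξ' t) (s t - (p - g t • f0)) : ℝ) = 0 := by
    rw [real_inner_comm]
    exact (Submodule.mem_orthogonal Vs (ξ' t)).mp h2 _ hmem
  have : (inner ℝ (-s' t) (s t - (p - g t • f0)) : ℝ)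
      = (inner ℝ (ξ' t - s' t) (s t - (p - g t • f0)) : ℝ)
        - (inner ℝ (ξ' t) (s t - (p - g t • f0)) : ℝ) := by
    rw [← inner_sub_left]
    congr 1
    abel
  rw [this, key2, sub_zero]
  exact key1

end
end

section
/- Dynamics on a face of the polytope: let V be a finite-dimensional real inner product space, n_1, …, n_m ∈ V, c_1, …, c_m > 0, Z = ∩_{i=1}^{m}{x ∈ V : ⟨n_i, x⟩ ≤ c_i}, and f_0 ∈ V. Fix k ≤ m with n_1, …, n_k linearly independent, let E_k = {x ∈ V : ⟨n_i, x⟩ = c_i for i = 1, …, k}, and let f_k be the orthogonal projection of f_0 onto the subspace {x ∈ V : ⟨n_i, x⟩ = 0 for i = 1, …, k}. Suppose g : (t_1, t_2) → ℝ and u : (t_1, t_2) → V are absolutely continuous, −u'(t) + f_0 g'(t) ∈ N_Z(u(t)) for a.e. t ∈ (t_1, t_2), and for every t ∈ (t_1, t_2) the point u(t) lies in Z ∩ E_k and has a neighborhood within E_k contained in Z. Then u'(t) = g'(t) f_k for a.e. t ∈ (t_1, t_2). -/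
open MeasureTheory Set

noncomputable section

/-- `u` is absolutely continuous on the open interval `(a,b)` with a.e.
derivative `u'`. -/
def IsACOnIoo {W : Type*} [NormedAddCommGroup W] [NormedSpace ℝ W]
    (a b : ℝ) (u u' : ℝ → W) : Prop :=
  IntervalIntegrable u' volume a b ∧
    ∀ s ∈ Ioo a b, ∀ t ∈ Ioo a b, s ≤ t → u t = u s + ∫ x in s..t, u' x

/-- Dynamics of the stop inclusion on a face of the polytope: while the
solution stays in the relative interior of the face cut out by the first `k`
constraints, its velocity is `g'(t) f_k`, where `f_k` is the orthogonal
projection of `f₀` onto the corresponding subspace. -/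
theorem stop_dynamics_on_face
    {V : Type*} [NormedAddCommGroup V] [InnerProductSpace ℝ V] [FiniteDimensional ℝ V]
    (m : ℕ) (n : Fin m → V) (cc : Fin m → ℝ) (hcc : ∀ i, 0 < cc i)
    (Z : Set V) (hZ : Z = ⋂ i : Fin m, {x : V | (inner ℝ (n i) x : ℝ) ≤ cc i})
    (f0 : V) (k : ℕ) (hk : k ≤ m)
    (hlin : LinearIndependent ℝ fun i : {i : Fin m // (i : ℕ) < k} => n i.1)
    (K : Submodule ℝ V)
    (hK : K = (Submodule.span ℝ (n '' {i : Fin m | (i : ℕ) < k}))ᗮ)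
    (fk : V) (hfk : fk ∈ K) (hfkproj : ∀ v ∈ K, (inner ℝ (f0 - fk) v : ℝ) = 0)
    (t1 t2 : ℝ) (ht : t1 < t2)
    (g g' : ℝ → ℝ) (hg : IsACOnIoo t1 t2 g g')
    (u u' : ℝ → V) (hu : IsACOnIoo t1 t2 u u')
    (hincl : ∀ᵐ t ∂(volume.restrict (Ioo t1 t2)),
      -u' t + g' t • f0 ∈ normalCone Z (u t))
    (hface : ∀ t ∈ Ioo t1 t2, u t ∈ Z ∧
      (∀ i : Fin m, (i : ℕ) < k → (inner ℝ (n i) (u t) : ℝ) = cc i) ∧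
      ∃ ε > 0, ∀ y : V, (∀ i : Fin m, (i : ℕ) < k → (inner ℝ (n i) y : ℝ) = cc i) →
        ‖y - u t‖ < ε → y ∈ Z) :
    ∀ᵐ t ∂(volume.restrict (Ioo t1 t2)), u' t = g' t • fk := by
  classical
  -- the truncated derivative
  set v : ℝ → V := (Ioo t1 t2).indicator u' with hv
  have hvint : Integrable v volume := by
    have h1 : IntegrableOn u' (Ioc t1 t2) volume :=
      (intervalIntegrable_iff_integrableOn_Ioc_of_le ht.le).mp hu.1
    have h2 : IntegrableOn u' (Ioo t1 t2) volume := h1.mono_set Ioo_subset_Ioc_self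
    exact (integrable_indicator_iff measurableSet_Ioo).mpr h2
  have hLeb := IsUnifLocDoublingMeasure.ae_tendsto_average (μ := (volume : Measure ℝ))
    hvint.locallyIntegrable 1
  -- key orthogonality: n i ⊥ any member of K
  have hKperp : ∀ w ∈ K, ∀ i : Fin m, (i : ℕ) < k → (inner ℝ (n i) w : ℝ) = 0 := by
    intro w hw i hi
    rw [hK] at hw
    exact (Submodule.mem_orthogonal _ _).mp hw (n i)
      (Submodule.subset_span ⟨i, hi, rfl⟩)
  filter_upwards [ae_restrict_of_ae hLeb, ae_restrict_mem measurableSet_Ioo, hincl]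
    with x hx hmem hnc
  obtain ⟨huZ, hEk, ε2, hε2, hnbhd⟩ := hface x hmem
  -- Step A : inner ℝ (n i) (u' x) = 0 for i < k
  have hA : ∀ i : Fin m, (i : ℕ) < k → (inner ℝ (n i) (u' x) : ℝ) = 0 := by
    intro i hi
    set ε : ℝ := min (x - t1) (t2 - x) with hε
    have hεpos : 0 < ε := lt_min (by linarith [hmem.1]) (by linarith [hmem.2])
    have htend : Filter.Tendsto (fun δ : ℝ => ⨍ y in Metric.closedBall x δ, v y)
        (nhdsWithin 0 (Ioi 0)) (nhds (v x)) := by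
      refine hx (fun _ => x) id Filter.tendsto_id ?_
      filter_upwards [self_mem_nhdsWithin] with δ hδ
      exact Metric.mem_closedBall_self (by simpa using (le_of_lt hδ))
    have htend' : Filter.Tendsto (fun δ : ℝ =>
        (inner ℝ (n i) (⨍ y in Metric.closedBall x δ, v y) : ℝ))
        (nhdsWithin 0 (Ioi 0)) (nhds (inner ℝ (n i) (v x) : ℝ)) :=
      Filter.Tendsto.inner tendsto_const_nhds htend
    have hev : ∀ᶠ δ : ℝ in nhdsWithin 0 (Ioi 0),
        (inner ℝ (n i) (⨍ y in Metric.closedBall x δ, v y) : ℝ) = 0 := by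
      have : Ioo (0:ℝ) ε ∈ nhdsWithin (0:ℝ) (Ioi 0) :=
        Ioo_mem_nhdsGT_of_mem ⟨le_refl _, hεpos⟩
      filter_upwards [this] with δ hδ
      obtain ⟨hδ0, hδε⟩ := hδ
      have hsub : Metric.closedBall x δ ⊆ Ioo t1 t2 := by
        rw [Real.closedBall_eq_Icc]
        intro y hy
        constructor
        · have : ε ≤ x - t1 := min_le_left _ _
          linarith [hy.1]
        · have : ε ≤ t2 - x := min_le_right _ _
          linarith [hy.2]
      have hmem1 : x - δ ∈ Ioo t1 t2 := hsub (by
        rw [Real.closedBall_eq_Icc]; constructor <;> [linarith; linarith])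
      have hmem2 : x + δ ∈ Ioo t1 t2 := hsub (by
        rw [Real.closedBall_eq_Icc]; constructor <;> [linarith; linarith])
      have hint : ∫ y in Metric.closedBall x δ, v y
          = u (x + δ) - u (x - δ) := by
        rw [Real.closedBall_eq_Icc]
        rw [setIntegral_congr_fun measurableSet_Icc
          (fun y hy => indicator_of_mem (hsub (by rwa [Real.closedBall_eq_Icc])) u')]
        rw [integral_Icc_eq_integral_Ioc,
          ← intervalIntegral.integral_of_le (by linarith)]
        have := hu.2 (x - δ) hmem1 (x + δ) hmem2 (by linarith)
        rw [this]; abel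
      rw [setAverage_eq, hint, inner_smul_right, inner_sub_right,
        (hface _ hmem2).2.1 i hi, (hface _ hmem1).2.1 i hi]
      simp
    have h0 : (inner ℝ (n i) (v x) : ℝ) = 0 :=
      tendsto_nhds_unique (Filter.Tendsto.congr' hev htend') tendsto_const_nhds
    rwa [hv, indicator_of_mem hmem] at h0
  -- Step B : the normal-cone vector is orthogonal to K
  set w : V := -u' x + g' x • f0 with hw
  have hB : ∀ z ∈ K, (inner ℝ w z : ℝ) = 0 := by
    intro z hz
    have key : ∀ z ∈ K, (inner ℝ w z : ℝ) ≤ 0 := by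
      intro z hz
      set δ : ℝ := ε2 / (2 * (‖z‖ + 1)) with hδ
      have hz1 : (0:ℝ) < ‖z‖ + 1 := by positivity
      have hδpos : 0 < δ := by positivity
      have hyZ : u x + δ • z ∈ Z := by
        refine hnbhd _ (fun i hi => ?_) ?_
        · rw [inner_add_right, inner_smul_right, hKperp z hz i hi,
            hEk i hi]; ring
        · rw [add_sub_cancel_left, norm_smul, Real.norm_eq_abs,
            abs_of_pos hδpos]
          calc δ * ‖z‖ < δ * (2 * (‖z‖ + 1)) := by
                have : ‖z‖ < 2 * (‖z‖ + 1) := by nlinarith [norm_nonneg z]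
                exact mul_lt_mul_of_pos_left this hδpos
            _ = ε2 := by rw [hδ]; field_simp
      have := hnc _ hyZ
      have heq : u x - (u x + δ • z) = -(δ • z) := by abel
      rw [heq, inner_neg_right, inner_smul_right] at this
      nlinarith
    have h1 := key z hz
    have h2 := key (-z) (neg_mem hz)
    rw [inner_neg_right] at h2
    linarith
  -- Step C : combine
  set d : V := u' x - g' x • fk with hd
  have hdK : d ∈ K := by
    rw [hK, Submodule.mem_orthogonal]
    intro z hz
    induction hz using Submodule.span_induction with
    | mem y hy =>
        obtain ⟨i, hi, rfl⟩ := hy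
        rw [hd, inner_sub_right, inner_smul_right, hA i hi, hKperp fk hfk i hi]
        ring
    | zero => simp
    | add y z _ _ hy hz => rw [inner_add_left, hy, hz]; ring
    | smul a y _ hy => rw [inner_smul_left, hy]; simp
  have hdd : (inner ℝ d d : ℝ) = 0 := by
    have hdec : d = -w + g' x • (f0 - fk) := by
      rw [hd, hw, smul_sub]; abel
    calc (inner ℝ d d : ℝ) = inner ℝ (-w + g' x • (f0 - fk)) d := by rw [← hdec]
      _ = -(inner ℝ w d : ℝ) + g' x * inner ℝ (f0 - fk) d := by
          rw [inner_add_left, inner_neg_left, real_inner_smul_left]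
      _ = 0 := by rw [hB d hdK, hfkproj d hdK]; ring
  have : d = 0 := inner_self_eq_zero.mp hdd
  rw [hd, sub_eq_zero] at this
  exact this


end
end

section
/- Cone condition along the loading polyline: let V be a finite-dimensional real inner product space, n_1, …, n_m ∈ V, c_1, …, c_m > 0, Z = ∩_{i=1}^{m}{x ∈ V : ⟨n_i, x⟩ ≤ c_i}, and f_0 ∈ V. Let u* : [0, L] → Z be a solution of the multidimensional stop inclusion with input g(t) = t, and suppose that for some k and some d_{k−1} < d_k the function u* is affine on [d_{k−1}, d_k] with u*(d_{k−1}) = B_{k−1}, u*(d_k) = B_k, and that for every d ∈ (d_{k−1}, d_k) the point u*(d) satisfies ⟨n_i, u*(d)⟩ = c_i for i = 1, …, k−1 and ⟨n_i, u*(d)⟩ < c_i for i = k, …, m. Then −(B_k − B_{k−1})/(d_k − d_{k−1}) + f_0 ∈ {Σ_{i=1}^{k−1} α_i n_i : α_1, …, α_{k−1} ≥ 0}. -/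
open MeasureTheory Set

noncomputable section

section ConeAux

variable {V : Type*} [NormedAddCommGroup V] [InnerProductSpace ℝ V]
variable {ι : Type*} [Fintype ι] [DecidableEq ι]

def coneSet (n : ι → V) (s : Finset ι) : Set V :=
  {x | ∃ α : ι → ℝ, (∀ i, 0 ≤ α i) ∧ x = ∑ i ∈ s, α i • n i}

lemma coneSet_mono (n : ι → V) {s t : Finset ι} (h : s ⊆ t) :
    coneSet n s ⊆ coneSet n t := by
  rintro x ⟨α, hα, rfl⟩
  refine ⟨fun i => if i ∈ s then α i else 0, fun i => by dsimp only; split <;> simp [hα i], ?_⟩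
  rw [← Finset.sum_subset h (fun i _ his => by simp [his])]
  exact Finset.sum_congr rfl fun i hi => by simp [hi]

lemma isClosed_coneSet [FiniteDimensional ℝ V] (n : ι → V) (s : Finset ι) :
    IsClosed (coneSet n s) := by
  induction s using Finset.strongInduction with
  | _ s ih =>
  by_cases hind : LinearIndependent ℝ (fun i : {i // i ∈ s} => n i)
  · set f : ({i // i ∈ s} → ℝ) →ₗ[ℝ] V :=
      { toFun := fun α => ∑ i : {i // i ∈ s}, α i • n i
        map_add' := fun a b => by
          simp [add_smul, Finset.sum_add_distrib]
        map_smul' := fun c a => by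
          simp [Finset.smul_sum, mul_smul] } with hf
    have hker : LinearMap.ker f = ⊥ := by
      rw [LinearMap.ker_eq_bot']
      intro g hg
      funext i
      exact Fintype.linearIndependent_iff.mp hind g hg i
    have himg : coneSet n s = f '' {α : {i // i ∈ s} → ℝ | ∀ i, 0 ≤ α i} := by
      ext x
      constructor
      · rintro ⟨α, hα, rfl⟩
        refine ⟨fun i => α i.1, fun i => hα i.1, ?_⟩
        show ∑ i : {i // i ∈ s}, α i.1 • n i.1 = _
        rw [Finset.univ_eq_attach, Finset.sum_attach s (fun i => α i • n i)]
      · rintro ⟨β, hβ, rfl⟩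
        refine ⟨fun i => if h : i ∈ s then β ⟨i, h⟩ else 0,
          fun i => by dsimp only; split <;> simp [hβ _], ?_⟩
        show f β = _
        rw [hf]
        simp only [LinearMap.coe_mk, AddHom.coe_mk]
        show ∑ i : {i // i ∈ s}, β i • n i.1 = _
        rw [Finset.univ_eq_attach, ← Finset.sum_attach s
          (fun i => (if h : i ∈ s then β ⟨i, h⟩ else 0) • n i)]
        refine Finset.sum_congr rfl fun i _ => ?_
        rw [dif_pos i.2]
    have horth : IsClosed {α : {i // i ∈ s} → ℝ | ∀ i, 0 ≤ α i} := by
      have : {α : {i // i ∈ s} → ℝ | ∀ i, 0 ≤ α i} = ⋂ i, {α | 0 ≤ α i} := by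
        ext; simp [Set.mem_iInter]
      rw [this]
      exact isClosed_iInter fun i => isClosed_le continuous_const (continuous_apply i)
    rw [himg]
    exact (LinearMap.isClosedEmbedding_of_injective hker).isClosedMap _ horth
  · obtain ⟨g, hgsum, i1, hgi1⟩ := Fintype.not_linearIndependent_iff.mp hind
    have key : ∀ c : ι → ℝ, (∑ i ∈ s, c i • n i = 0) → (∃ i ∈ s, c i < 0) →
        coneSet n s ⊆ ⋃ i ∈ s.filter (fun j => c j < 0), coneSet n (s.erase i) := by
      intro c hcsum ⟨j1, hj1s, hj1⟩
      rintro x ⟨α, hα, rfl⟩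
      have hTne : (s.filter (fun j => c j < 0)).Nonempty :=
        ⟨j1, Finset.mem_filter.mpr ⟨hj1s, hj1⟩⟩
      obtain ⟨i0, hi0T, hmin⟩ :=
        (s.filter (fun j => c j < 0)).exists_min_image (fun j => α j / (-c j)) hTne
      obtain ⟨hi0s, hci0⟩ := Finset.mem_filter.mp hi0T
      set t := α i0 / (-c i0) with hT
      have ht : 0 ≤ t := div_nonneg (hα i0) (by linarith)
      set β := fun j => if j ∈ s then α j + t * c j else α j with hβdef
      have hβ : ∀ j, 0 ≤ β j := by
        intro j
        by_cases hjs : j ∈ s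
        · simp only [hβdef, if_pos hjs]
          by_cases hj : c j < 0
          · have h1 := hmin j (Finset.mem_filter.mpr ⟨hjs, hj⟩)
            have h2 : t * (-c j) ≤ α j := by
              rw [← le_div_iff₀ (by linarith : (0:ℝ) < -c j)]
              exact h1
            nlinarith
          · have := mul_nonneg ht (not_lt.mp hj)
            linarith [hα j]
        · simp only [hβdef, if_neg hjs]
          exact hα j
      have hβi0 : β i0 = 0 := by
        have hne : c i0 ≠ 0 := ne_of_lt hci0
        have hmul : t * c i0 = -α i0 := by
          rw [hT]
          field_simp
        simp only [hβdef, if_pos hi0s, hmul]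
        ring
      have hsum : ∑ j ∈ s, β j • n j = ∑ j ∈ s, α j • n j := by
        have hz : ∑ j ∈ s, (t * c j) • n j = 0 := by
          simp_rw [mul_smul]
          rw [← Finset.smul_sum, hcsum, smul_zero]
        have hcong : ∑ j ∈ s, β j • n j = ∑ j ∈ s, (α j + t * c j) • n j :=
          Finset.sum_congr rfl fun j hj => by rw [hβdef]; simp only [if_pos hj]
        rw [hcong]
        simp only [add_smul]
        rw [Finset.sum_add_distrib, hz, add_zero]
      refine Set.mem_iUnion₂.mpr ⟨i0, hi0T, β, hβ, ?_⟩
      rw [Finset.sum_erase s (by rw [hβi0]; simp), hsum]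
    have hdep : ∃ c : ι → ℝ, (∑ i ∈ s, c i • n i = 0) ∧ ∃ i ∈ s, c i < 0 := by
      set c : ι → ℝ := fun i => if h : i ∈ s then g ⟨i, h⟩ else 0 with hc
      have hcs : ∑ i ∈ s, c i • n i = 0 := by
        rw [← Finset.sum_attach s (fun i => c i • n i)]
        rw [← hgsum, Finset.univ_eq_attach]
        refine Finset.sum_congr rfl fun i _ => ?_
        simp only [hc, dif_pos i.2]
      have hcs' : ∑ i ∈ s, (-c) i • n i = 0 := by
        simp only [Pi.neg_apply, neg_smul, Finset.sum_neg_distrib, hcs, neg_zero]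
      rcases lt_or_gt_of_ne hgi1 with h | h
      · exact ⟨c, hcs, i1.1, i1.2, by simp only [hc, dif_pos i1.2]; exact h⟩
      · exact ⟨-c, hcs', i1.1, i1.2, by simp only [Pi.neg_apply, hc, dif_pos i1.2]; linarith⟩
    obtain ⟨c, hcsum, hcneg⟩ := hdep
    have hEq : coneSet n s = ⋃ i ∈ s.filter (fun j => c j < 0), coneSet n (s.erase i) := by
      apply Set.Subset.antisymm (key c hcsum hcneg)
      refine Set.iUnion₂_subset fun i hi => coneSet_mono n (Finset.erase_subset i s)
    rw [hEq]
    refine Set.Finite.isClosed_biUnion (Finset.finite_toSet _) fun i hi => ?_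
    have his : i ∈ s := (Finset.mem_filter.mp hi).1
    exact ih _ (Finset.erase_ssubset his)

lemma coneSet_farkas [FiniteDimensional ℝ V] (n : ι → V) (s : Finset ι) (y : V)
    (hy : ∀ v : V, (∀ i ∈ s, (inner ℝ (n i) v : ℝ) ≤ 0) → (inner ℝ y v : ℝ) ≤ 0) :
    y ∈ coneSet n s := by
  set K : ConvexCone ℝ V :=
    { carrier := coneSet n s
      smul_mem' := by
        rintro c hc x ⟨α, hα, rfl⟩
        refine ⟨fun i => c * α i, fun i => mul_nonneg hc.le (hα i), ?_⟩
        rw [Finset.smul_sum]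
        exact Finset.sum_congr rfl fun i _ => (mul_smul c (α i) (n i)).symm
      add_mem' := by
        rintro x ⟨α, hα, rfl⟩ z ⟨β, hβ, rfl⟩
        refine ⟨fun i => α i + β i, fun i => add_nonneg (hα i) (hβ i), ?_⟩
        rw [← Finset.sum_add_distrib]
        exact Finset.sum_congr rfl fun i _ => (add_smul (α i) (β i) (n i)).symm } with hK
  have hne : (K : Set V).Nonempty := ⟨0, fun _ => 0, fun _ => le_rfl, by simp⟩
  have hcl : IsClosed (K : Set V) := isClosed_coneSet n s
  have hpt : K.Pointed := ⟨fun _ => 0, fun _ => le_rfl, by simp⟩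
  set C : ProperCone ℝ V := ⟨K.toPointedCone hpt, hcl⟩ with hC
  by_contra hyn
  have hyC : y ∉ C := hyn
  obtain ⟨w, hw, hyw⟩ := C.hyperplane_separation' hyC
  have h1 : ∀ i ∈ s, (0:ℝ) ≤ inner ℝ (n i) w := by
    intro i his
    refine hw (n i) ⟨fun j => if j = i then 1 else 0,
      fun j => by dsimp only; split <;> norm_num, ?_⟩
    simp only [ite_smul, one_smul, zero_smul]
    rw [Finset.sum_ite_eq' s i n, if_pos his]
  have h2 : (inner ℝ y (-w) : ℝ) ≤ 0 := by
    refine hy (-w) fun i his => ?_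
    rw [inner_neg_right]
    linarith [h1 i his]
  rw [inner_neg_right] at h2
  linarith

end ConeAux

/-- Cone condition along the loading polyline: the direction of a link of the
loading trajectory differs from `f₀` by a nonnegative combination of the
normals of the active constraints. -/
theorem polyline_cone_condition
    {V : Type*} [NormedAddCommGroup V] [InnerProductSpace ℝ V] [FiniteDimensional ℝ V]
    (m : ℕ) (n : Fin m → V) (cc : Fin m → ℝ) (hcc : ∀ i, 0 < cc i)
    (Z : Set V) (hZ : Z = ⋂ i : Fin m, {x : V | (inner ℝ (n i) x : ℝ) ≤ cc i})
    (f0 : V) (L : ℝ) (hL : 0 < L)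
    (ustar ustar' : ℝ → V) (hsol : IsStopSol Z f0 L (fun _ => 1) ustar ustar')
    (k : ℕ) (hk1 : 1 ≤ k) (hkm : k ≤ m)
    (dprev dnext : ℝ) (hd0 : 0 ≤ dprev) (hdd : dprev < dnext) (hdL : dnext ≤ L)
    (Bprev Bnext : V) (hBp : ustar dprev = Bprev) (hBn : ustar dnext = Bnext)
    (haff : ∀ x ∈ Icc dprev dnext,
      ustar x = Bprev + ((x - dprev) / (dnext - dprev)) • (Bnext - Bprev))
    (hactive : ∀ x ∈ Ioo dprev dnext,
      (∀ i : Fin m, (i : ℕ) < k - 1 → (inner ℝ (n i) (ustar x) : ℝ) = cc i) ∧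
      ∀ i : Fin m, k - 1 ≤ (i : ℕ) → (inner ℝ (n i) (ustar x) : ℝ) < cc i) :
    ∃ α : Fin m → ℝ, (∀ i, 0 ≤ α i) ∧
      -((dnext - dprev)⁻¹ • (Bnext - Bprev)) + f0 =
        ∑ i ∈ Finset.univ.filter (fun i : Fin m => (i : ℕ) < k - 1), α i • n i := by
  obtain ⟨⟨hInt, hRepr⟩, hu0, hmemZ, hcone⟩ := hsol
  set S : Finset (Fin m) := Finset.univ.filter (fun i : Fin m => (i : ℕ) < k - 1) with hS
  set y : V := -((dnext - dprev)⁻¹ • (Bnext - Bprev)) + f0 with hy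
  have hΔ : (0:ℝ) < dnext - dprev := sub_pos.mpr hdd
  -- integrability on subintervals
  have hsub : uIcc dprev dnext ⊆ uIcc (0:ℝ) L := by
    rw [uIcc_of_le hL.le, uIcc_of_le hdd.le]
    exact Icc_subset_Icc hd0 hdL
  have hint1 : IntervalIntegrable ustar' volume 0 dnext :=
    hInt.mono_set (by rw [uIcc_of_le hL.le, uIcc_of_le (by linarith : (0:ℝ) ≤ dnext)]
                      exact Icc_subset_Icc le_rfl hdL)
  have hint2 : IntervalIntegrable ustar' volume 0 dprev :=
    hInt.mono_set (by rw [uIcc_of_le hL.le, uIcc_of_le hd0]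
                      exact Icc_subset_Icc le_rfl (by linarith))
  have hint3 : IntervalIntegrable ustar' volume dprev dnext := hInt.mono_set hsub
  have hBB : (∫ t in dprev..dnext, ustar' t) = Bnext - Bprev := by
    have e1 := hRepr dnext ⟨by linarith, hdL⟩
    have e2 := hRepr dprev ⟨hd0, by linarith⟩
    rw [hBn] at e1
    rw [hBp] at e2
    rw [← intervalIntegral.integral_interval_sub_left hint1 hint2, e1, e2]
    abel
  -- the Farkas dual hypothesis
  suffices hsuf : y ∈ coneSet n S by
    obtain ⟨α, hα, hrep⟩ := hsuf
    exact ⟨α, hα, hrep⟩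
  apply coneSet_farkas
  intro v hv
  -- a.e. pointwise inequality on [dprev, dnext]
  have h1 : ∀ᵐ t ∂(volume.restrict (Icc dprev dnext)),
      -ustar' t + (1:ℝ) • f0 ∈ normalCone Z (ustar t) :=
    ae_restrict_of_ae_restrict_of_subset (Icc_subset_Icc hd0 hdL) hcone
  have h2 : ∀ᵐ t ∂(volume.restrict (Icc dprev dnext)), t ∈ Ioo dprev dnext := by
    rw [ae_iff]
    have hnull : volume.restrict (Icc dprev dnext) {t | ¬ t ∈ Ioo dprev dnext} = 0 := by
      have hms : MeasurableSet {t : ℝ | ¬ t ∈ Ioo dprev dnext} := measurableSet_Ioo.compl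
      rw [Measure.restrict_apply hms]
      refine measure_mono_null ?_ (((Set.finite_singleton dnext).insert dprev).measure_zero _)
      rintro t ⟨ht1, ht2, ht3⟩
      simp only [Set.mem_setOf_eq, Set.mem_Ioo, not_and_or, not_lt] at ht1
      rcases ht1 with h | h
      · exact Or.inl (le_antisymm h ht2)
      · exact Or.inr (le_antisymm ht3 h)
    exact hnull
  have hae : ∀ᵐ t ∂(volume.restrict (Icc dprev dnext)),
      (inner ℝ v f0 : ℝ) ≤ inner ℝ v (ustar' t) := by
    filter_upwards [h1, h2] with t hN htIoo
    rw [one_smul] at hN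
    obtain ⟨heq, hlt⟩ := hactive t htIoo
    -- find ε > 0 with ustar t + ε • v ∈ Z
    have hev : ∀ᶠ ε in nhdsWithin (0:ℝ) (Ioi 0), ustar t + ε • v ∈ Z := by
      rw [hZ]
      have hall : ∀ i : Fin m, ∀ᶠ ε in nhdsWithin (0:ℝ) (Ioi 0),
          (inner ℝ (n i) (ustar t + ε • v) : ℝ) ≤ cc i := by
        intro i
        rcases lt_or_ge (i : ℕ) (k - 1) with hik | hik
        · have hvi := hv i (by simp [hS, hik])
          filter_upwards [self_mem_nhdsWithin] with ε hε
          rw [inner_add_right, real_inner_smul_right, heq i hik]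
          nlinarith [mul_nonpos_of_nonneg_of_nonpos (le_of_lt hε) hvi]
        · have hlim : Filter.Tendsto
              (fun ε : ℝ => (inner ℝ (n i) (ustar t) : ℝ) + ε * inner ℝ (n i) v)
              (nhdsWithin (0:ℝ) (Ioi 0)) (nhds ((inner ℝ (n i) (ustar t) : ℝ))) := by
            have hc : Filter.Tendsto
                (fun ε : ℝ => (inner ℝ (n i) (ustar t) : ℝ) + ε * inner ℝ (n i) v)
                (nhds 0) (nhds ((inner ℝ (n i) (ustar t) : ℝ) + 0 * inner ℝ (n i) v)) := by
              exact (Continuous.tendsto (by continuity) 0)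
            simpa using hc.mono_left nhdsWithin_le_nhds
          filter_upwards [hlim.eventually_lt_const (hlt i hik)] with ε hε
          rw [inner_add_right, real_inner_smul_right]
          exact le_of_lt hε
      filter_upwards [Filter.eventually_all.mpr hall] with ε hε
      exact Set.mem_iInter.mpr fun i => hε i
    obtain ⟨ε, hεZ, hε0⟩ := (hev.and self_mem_nhdsWithin).exists
    have hε0' : (0:ℝ) < ε := hε0
    have hNv := hN (ustar t + ε • v) hεZ
    have hcalc : (inner ℝ (-ustar' t + f0) (ustar t - (ustar t + ε • v)) : ℝ)
        = -(ε * inner ℝ (-ustar' t + f0) v) := by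
      rw [sub_add_cancel_left, inner_neg_right, real_inner_smul_right]
    rw [hcalc] at hNv
    have h3 : (inner ℝ (-ustar' t + f0) v : ℝ) ≤ 0 := by nlinarith
    rw [inner_add_left, inner_neg_left] at h3
    have hc1 : (inner ℝ v f0 : ℝ) = inner ℝ f0 v := real_inner_comm f0 v
    have hc2 : (inner ℝ v (ustar' t) : ℝ) = inner ℝ (ustar' t) v := real_inner_comm (ustar' t) v
    linarith
  have hIcc : IntervalIntegrable (fun t => (inner ℝ v (ustar' t) : ℝ)) volume dprev dnext :=
    ⟨(innerSL ℝ v).integrable_comp hint3.1, (innerSL ℝ v).integrable_comp hint3.2⟩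
  have hconst : IntervalIntegrable (fun _ : ℝ => (inner ℝ v f0 : ℝ)) volume dprev dnext :=
    intervalIntegrable_const
  have hmono := intervalIntegral.integral_mono_ae_restrict hdd.le hconst hIcc hae
  rw [intervalIntegral.integral_const] at hmono
  have hlin : (∫ t in dprev..dnext, (inner ℝ v (ustar' t) : ℝ)) = inner ℝ v (Bnext - Bprev) := by
    have hcc2 := (innerSL ℝ v).intervalIntegral_comp_comm hint3
    rw [hBB] at hcc2
    simpa using hcc2
  rw [hlin, smul_eq_mul] at hmono
  rw [hy, inner_add_left, inner_neg_left, real_inner_smul_left]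
  have hinv : (dnext - dprev) * (dnext - dprev)⁻¹ = 1 := mul_inv_cancel₀ hΔ.ne'
  have hc1 : (inner ℝ (Bnext - Bprev) v : ℝ) = inner ℝ v (Bnext - Bprev) :=
    real_inner_comm v (Bnext - Bprev)
  have hc2 : (inner ℝ f0 v : ℝ) = inner ℝ v f0 := real_inner_comm v f0
  have hinvpos : (0:ℝ) < (dnext - dprev)⁻¹ := inv_pos.mpr hΔ
  have h5 : (inner ℝ v f0 : ℝ) ≤ (dnext - dprev)⁻¹ * inner ℝ v (Bnext - Bprev) := by
    have h6 := mul_le_mul_of_nonneg_left hmono hinvpos.le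
    calc (inner ℝ v f0 : ℝ)
        = (dnext - dprev)⁻¹ * ((dnext - dprev) * inner ℝ v f0) := by
          rw [← mul_assoc, inv_mul_cancel₀ hΔ.ne', one_mul]
      _ ≤ (dnext - dprev)⁻¹ * inner ℝ v (Bnext - Bprev) := h6
  rw [hc1, hc2]
  linarith

end
end

section
/- Series connection of Prandtl stops is a stop: let k ≥ 1, a_1, …, a_k > 0, ρ_1, …, ρ_k > 0, and r_i = a_i ρ_i. Let g : [0,T] → ℝ be absolutely continuous with g(0) = 0, and suppose ε_1, …, ε_k and e_1, …, e_k are absolutely continuous on [0,T] with ε_i(0) = e_i(0) = 0, Σ_{i=1}^{k} ε_i(t) = g(t) for all t, each e_i is the stop operator output with threshold ρ_i and input ε_i, and the stresses coincide: a_i e_i(t) = a_j e_j(t) for all i, j and all t. Define ã = (Σ_{i=1}^{k} 1/a_i)^{−1}, r̃ = min_i r_i, and ρ̃ = r̃/ã. Then the common stress σ(t) = a_1 e_1(t) satisfies σ(t) = ã e(t), where e = σ/ã is the stop operator output with threshold ρ̃ and input g; that is, e is absolutely continuous, e(0) = 0, |e(t)| ≤ ρ̃ for all t, and (g'(t) −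 e'(t))(e(t) − z) ≥ 0 for a.e. t and every z ∈ [−ρ̃, ρ̃]. -/
open MeasureTheory Set

noncomputable section

/-- Output `e` of the one-dimensional stop operator with threshold `ρ` on
`[0,T]`, for an input with a.e. derivative `ε'`. -/
def IsStopOutput (ρ T : ℝ) (ε' e e' : ℝ → ℝ) : Prop :=
  IsACOn T e e' ∧ e 0 = 0 ∧ (∀ t ∈ Icc (0 : ℝ) T, |e t| ≤ ρ) ∧
    ∀ᵐ t ∂(volume.restrict (Icc (0 : ℝ) T)),
      ∀ z ∈ Icc (-ρ) ρ, 0 ≤ (ε' t - e' t) * (e t - z)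

/-- A series connection of Prandtl stops is a single stop: if the elongations
of `k` stops add up to `g` and all stresses coincide, then the common stress
divided by the effective stiffness `ã = (∑ 1/a_i)⁻¹` is the output of the stop
operator with threshold `ρ̃ = r̃/ã`, `r̃ = min_i a_i ρ_i`, and input `g`. -/
theorem series_connection_is_stop
    (k : ℕ) (hk : 1 ≤ k)
    (a ρ : Fin k → ℝ) (ha : ∀ i, 0 < a i) (hρ : ∀ i, 0 < ρ i)
    (T : ℝ) (hT : 0 < T)
    (g g' : ℝ → ℝ) (hg : IsACOn T g g') (hg0 : g 0 = 0)
    (ε ε' e e' : Fin k → ℝ → ℝ)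
    (hε0 : ∀ i, ε i 0 = 0) (he0 : ∀ i, e i 0 = 0)
    (hεac : ∀ i, IsACOn T (ε i) (ε' i))
    (hsum : ∀ t ∈ Icc (0 : ℝ) T, ∑ i, ε i t = g t)
    (hstop : ∀ i, IsStopOutput (ρ i) T (ε' i) (e i) (e' i))
    (hstress : ∀ i j : Fin k, ∀ t ∈ Icc (0 : ℝ) T, a i * e i t = a j * e j t) :
    ∃ E' : ℝ → ℝ,
      IsStopOutput
        ((Finset.univ.inf' ⟨⟨0, hk⟩, Finset.mem_univ _⟩ fun i : Fin k => a i * ρ i) /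
          (∑ i, (a i)⁻¹)⁻¹)
        T g'
        (fun t => a ⟨0, hk⟩ * e ⟨0, hk⟩ t / (∑ i, (a i)⁻¹)⁻¹) E' := by
  classical
  set i0 : Fin k := ⟨0, hk⟩ with hi0
  set S : ℝ := ∑ i, (a i)⁻¹ with hSdef
  have hS : 0 < S := Finset.sum_pos (fun i _ => inv_pos.mpr (ha i)) ⟨i0, Finset.mem_univ _⟩
  set r : ℝ := Finset.univ.inf' ⟨i0, Finset.mem_univ _⟩ (fun i : Fin k => a i * ρ i) with hrdef
  have hei : ∀ i : Fin k, ∀ t ∈ Icc (0 : ℝ) T, e i t = a i0 * e i0 t / a i := by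
    intro i t ht
    have h := hstress i0 i t ht
    rw [eq_div_iff (ha i).ne']
    linarith [h]
  refine ⟨fun t => g' t - ∑ i, (ε' i t - e' i t), ?_, ?_, ?_, ?_⟩
  · -- absolute continuity
    constructor
    · have h1 : IntervalIntegrable (fun x => ∑ i, (ε' i x - e' i x)) volume 0 T := by
        have h2 := IntervalIntegrable.sum (μ := volume) (a := (0:ℝ)) (b := T)
          Finset.univ (fun i _ => (hεac i).1.sub (hstop i).1.1)
        have h3 : (∑ i : Fin k, fun x => ε' i x - e' i x)
            = fun x => ∑ i, (ε' i x - e' i x) := by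
          funext x; simp
        rwa [h3] at h2
      exact hg.1.sub h1
    · intro t ht
      have ht0 : (0 : ℝ) ≤ t := ht.1
      have hsub : uIcc 0 t ⊆ uIcc 0 T := by
        rw [uIcc_of_le ht0, uIcc_of_le hT.le]
        exact Icc_subset_Icc le_rfl ht.2
      have hgint : IntervalIntegrable g' volume 0 t := hg.1.mono_set hsub
      have hεint : ∀ i : Fin k, IntervalIntegrable (ε' i) volume 0 t :=
        fun i => (hεac i).1.mono_set hsub
      have heint : ∀ i : Fin k, IntervalIntegrable (e' i) volume 0 t :=
        fun i => (hstop i).1.1.mono_set hsub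
      have hgt : ∫ s in (0:ℝ)..t, g' s = g t := by
        have h := hg.2 t ht
        rw [h, hg0]; ring
      have hεt : ∀ i : Fin k, ∫ s in (0:ℝ)..t, ε' i s = ε i t := by
        intro i
        have h := (hεac i).2 t ht
        rw [h, hε0 i]; ring
      have het : ∀ i : Fin k, ∫ s in (0:ℝ)..t, e' i s = e i t := by
        intro i
        have h := (hstop i).1.2 t ht
        rw [h, he0 i]; ring
      have hsumint : IntervalIntegrable (fun x => ∑ i, (ε' i x - e' i x)) volume 0 t := by
        have h2 := IntervalIntegrable.sum (μ := volume) (a := (0:ℝ)) (b := t)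
          Finset.univ (fun i _ => (hεint i).sub (heint i))
        have h3 : (∑ i : Fin k, fun x => ε' i x - e' i x)
            = fun x => ∑ i, (ε' i x - e' i x) := by
          funext x; simp
        rwa [h3] at h2
      have hint : ∫ s in (0:ℝ)..t, (g' s - ∑ i, (ε' i s - e' i s))
          = g t - ∑ i, (ε i t - e i t) := by
        rw [intervalIntegral.integral_sub hgint hsumint, hgt,
          intervalIntegral.integral_finset_sum (fun i _ => (hεint i).sub (heint i))]
        congr 1
        refine Finset.sum_congr rfl fun i _ => ?_
        rw [intervalIntegral.integral_sub (hεint i) (heint i), hεt i, het i]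
      have hE : ∑ i, e i t = a i0 * e i0 t * S := by
        rw [hSdef, Finset.mul_sum]
        refine Finset.sum_congr rfl fun i _ => ?_
        rw [hei i t ht]; field_simp
      show a i0 * e i0 t / S⁻¹ = a i0 * e i0 0 / S⁻¹ + _
      rw [hint, ← hsum t ht, he0 i0]
      have hcancel : ∑ i, ε i t - ∑ i, (ε i t - e i t) = ∑ i, e i t := by
        rw [← Finset.sum_sub_distrib]
        refine Finset.sum_congr rfl fun i _ => by ring
      rw [hcancel, hE, div_eq_mul_inv, div_eq_mul_inv, inv_inv]
      ring
  · simp [he0 i0]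
  · -- bound
    intro t ht
    have hr : |a i0 * e i0 t| ≤ r := by
      rw [hrdef]
      apply Finset.le_inf'
      intro i _
      have h := hstress i0 i t ht
      rw [h, abs_mul, abs_of_pos (ha i)]
      exact mul_le_mul_of_nonneg_left ((hstop i).2.2.1 t ht) (ha i).le
    show |a i0 * e i0 t / S⁻¹| ≤ r / S⁻¹
    rw [div_eq_mul_inv, div_eq_mul_inv, inv_inv, abs_mul, abs_of_pos hS]
    exact mul_le_mul_of_nonneg_right hr hS.le
  · -- variational inequality
    have hmem := ae_restrict_mem (μ := (volume : Measure ℝ)) (measurableSet_Icc : MeasurableSet (Icc (0:ℝ) T))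
    have hall : ∀ᵐ t ∂(volume.restrict (Icc (0:ℝ) T)),
        ∀ i : Fin k, ∀ z ∈ Icc (-(ρ i)) (ρ i), 0 ≤ (ε' i t - e' i t) * (e i t - z) :=
      (ae_all_iff.mpr fun i => (hstop i).2.2.2)
    filter_upwards [hmem, hall] with t ht hi z hz
    have hEt : ∀ i : Fin k, e i t = a i0 * e i0 t / a i := fun i => hei i t ht
    have hzabs : |z| ≤ r * S := by
      have h := abs_le.mpr ⟨neg_le.mp (neg_le.mpr hz.1), hz.2⟩
      rwa [div_eq_mul_inv, inv_inv] at h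
    have key : (g' t - (g' t - ∑ i, (ε' i t - e' i t))) * (a i0 * e i0 t / S⁻¹ - z)
        = ∑ i, ((ε' i t - e' i t) * (e i t - z / (S * a i))) * (S * a i) := by
      rw [div_eq_mul_inv, inv_inv, sub_sub_cancel, Finset.sum_mul]
      refine Finset.sum_congr rfl fun i _ => ?_
      rw [hEt i]
      field_simp [hS.ne', (ha i).ne']
    show 0 ≤ (g' t - (g' t - ∑ i, (ε' i t - e' i t))) * (a i0 * e i0 t / S⁻¹ - z)
    rw [key]
    refine Finset.sum_nonneg fun i _ => mul_nonneg (hi i _ ?_) (mul_pos hS (ha i)).le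
    have hzi : |z / (S * a i)| ≤ ρ i := by
      rw [abs_div, abs_of_pos (mul_pos hS (ha i)), div_le_iff₀ (mul_pos hS (ha i))]
      have h1 : r ≤ a i * ρ i := Finset.inf'_le _ (Finset.mem_univ i)
      calc |z| ≤ r * S := hzabs
        _ ≤ (a i * ρ i) * S := mul_le_mul_of_nonneg_right h1 hS.le
        _ = ρ i * (S * a i) := by ring
    exact ⟨(abs_le.mp hzi).1, (abs_le.mp hzi).2⟩

end
end

section
/- A linear connection of springs realizes a Prandtl–Ishlinskii operator: consider a linear connection of springs with chains n = 0, …, S−1 and effective parameters ã_n, r̃_n, ρ̃_n = r̃_n/ã_n. Let g : [0,T] → ℝ be absolutely continuous with g(0) = 0. Suppose that for each chain n and each edge e of that chain there are absolutely continuous deformations ε_e and elastic deformations e_e with ε_e(0) = e_e(0) = 0 such that: (i) each e_e is the stop operator output with threshold ρ_e = r_e/a_e and input ε_e; (ii) within each chain the stresses coincide, a_e e_e(t) = a_{e'} e_{e'}(t) =: σ_n(t) for all edges e, e' of chain n and all t; and (iii) the total elongation along each chain equals the input: Σ_{e in chain n} ε_e(t) = g(t). Then the total reaction force R(t) = Σ_{n=0}^{S−1}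 σ_n(t) satisfies R(t) = Σ_{n=0}^{S−1} ã_n S_{ρ̃_n}[g](t); that is, R is the output of the Prandtl–Ishlinskii operator with weights ã_n and thresholds ρ̃_n applied to g. -/
open MeasureTheory Set

noncomputable section

/-- Edges of a linear connection: chain `n` has `c n + 2` edges, edge `⟨n,0⟩`
is the edge `(1, i_n+1)` and edge `⟨n, c n + 1⟩` is the edge `(i_{n+1}, N)`. -/
def LCEdge (S : ℕ) (c : Fin S → ℕ) : Type := Σ n : Fin S, Fin (c n + 2)

instance (S : ℕ) (c : Fin S → ℕ) : Fintype (LCEdge S c) := by unfold LCEdge; infer_instance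

/-- The configuration space `E = ℝ^M` of a linear connection. -/
def LCSp (S : ℕ) (c : Fin S → ℕ) : Type := EuclideanSpace ℝ (LCEdge S c)

instance (S : ℕ) (c : Fin S → ℕ) : CoeFun (LCSp S c) (fun _ => LCEdge S c → ℝ) where
  coe v := WithLp.ofLp v

instance (S : ℕ) (c : Fin S → ℕ) : NormedAddCommGroup (LCSp S c) := by
  unfold LCSp; infer_instance

instance (S : ℕ) (c : Fin S → ℕ) : InnerProductSpace ℝ (LCSp S c) := by
  unfold LCSp; infer_instance

/-- Diagonal rescaling map `v ↦ (w e * v e)_e`. -/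
def dmulLC {S : ℕ} {c : Fin S → ℕ} (w : LCEdge S c → ℝ) :
    LCSp S c →ₗ[ℝ] LCSp S c where
  toFun v := WithLp.toLp 2 (fun e => w e * v e)
  map_add' x y := WithLp.ofLp_injective 2 <| funext fun e => by
    show w e * (x e + y e) = w e * x e + w e * y e; ring
  map_smul' m x := WithLp.ofLp_injective 2 <| funext fun e => by
    show w e * (m * x e) = m * (w e * x e); ring

/-- The subspace `W` of deformations compatible with the geometric constraints
(at zero input): the sum of deformations along each chain is zero. -/
def WLC (S : ℕ) (c : Fin S → ℕ) : Submodule ℝ (LCSp S c) where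
  carrier := {ε | ∀ n : Fin S, ∑ j : Fin (c n + 2), ε ⟨n, j⟩ = 0}
  zero_mem' := fun n => by
    have : ∀ j : Fin (c n + 2), (0 : LCSp S c) ⟨n, j⟩ = 0 := fun j => rfl
    simp [this]
  add_mem' := by
    intro a b ha hb n
    have : ∀ j : Fin (c n + 2), (a + b) (⟨n, j⟩ : LCEdge S c) = a ⟨n, j⟩ + b ⟨n, j⟩ :=
      fun j => rfl
    simp [this, Finset.sum_add_distrib, ha n, hb n]
  smul_mem' := by
    intro m a ha n
    have : ∀ j : Fin (c n + 2), (m • a) (⟨n, j⟩ : LCEdge S c) = m * a ⟨n, j⟩ :=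
      fun j => rfl
    simp [this, ← Finset.mul_sum, ha n]

/-- The subspace `V = A^{-1/2} W^⊥`. -/
def VLC {S : ℕ} {c : Fin S → ℕ} (a : LCEdge S c → ℝ) : Submodule ℝ (LCSp S c) :=
  (WLC S c)ᗮ.map (dmulLC fun e => (Real.sqrt (a e))⁻¹)

/-- The box `C` of admissible stresses. -/
def CboxLC {S : ℕ} {c : Fin S → ℕ} (r : LCEdge S c → ℝ) : Set (LCSp S c) :=
  {σ | ∀ e, |σ e| ≤ r e}

/-- The rescaled polytope `Π = A^{-1/2} C`. -/
def PiLC {S : ℕ} {c : Fin S → ℕ} (a r : LCEdge S c → ℝ) : Set (LCSp S c) :=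
  (dmulLC fun e => (Real.sqrt (a e))⁻¹) '' CboxLC r

/-- The vector `k₀`: component `1` on the edges `(i_n, N)` (the last edge of
each chain), `0` elsewhere. -/
def k0LC (S : ℕ) (c : Fin S → ℕ) : LCSp S c := WithLp.toLp 2 fun e : LCEdge S c =>
  if (e.2 : ℕ) = c e.1 + 1 then (1 : ℝ) else 0

/-- Effective stiffness `ã_n` of chain `n`. -/
def atilLC {S : ℕ} {c : Fin S → ℕ} (a : LCEdge S c → ℝ) (n : Fin S) : ℝ :=
  (∑ j : Fin (c n + 2), (a ⟨n, j⟩)⁻¹)⁻¹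

/-- Effective threshold `r̃_n` of chain `n`. -/
def rtilLC {S : ℕ} {c : Fin S → ℕ} (r : LCEdge S c → ℝ) (n : Fin S) : ℝ :=
  Finset.univ.inf' ⟨⟨0, by omega⟩, Finset.mem_univ _⟩ fun j : Fin (c n + 2) => r ⟨n, j⟩

/-- The facet `Π_n` of `Π` on which the first edge of chain `n` is at its
positive threshold. -/
def PfaceLC {S : ℕ} {c : Fin S → ℕ} (a r : LCEdge S c → ℝ) (n : Fin S) :
    Set (LCSp S c) :=
  {v ∈ PiLC a r | Real.sqrt (a ⟨n, 0⟩) * v ⟨n, 0⟩ = r ⟨n, 0⟩}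

/-- The face `F_j = V ∩ Π_1 ∩ ⋯ ∩ Π_j` of the polytope `Π ∩ V`. -/
def FfaceLC {S : ℕ} {c : Fin S → ℕ} (a r : LCEdge S c → ℝ) (j : ℕ) :
    Set (LCSp S c) :=
  ↑(VLC a) ∩ PiLC a r ∩ ⋂ (n : Fin S) (_ : (n : ℕ) < j), PfaceLC a r n

open Filter Metric in
open scoped Topology in
private lemma ae_eq_of_intInt_eq {T : ℝ} {f₁ f₂ : ℝ → ℝ}
    (h₁ : IntervalIntegrable f₁ volume 0 T) (h₂ : IntervalIntegrable f₂ volume 0 T)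
    (heq : ∀ t ∈ Icc (0 : ℝ) T, (∫ s in (0:ℝ)..t, f₁ s) = ∫ s in (0:ℝ)..t, f₂ s) :
    ∀ᵐ t ∂(volume.restrict (Icc (0 : ℝ) T)), f₁ t = f₂ t := by
  rcases le_or_gt T 0 with hT | hT
  · have hz : volume.restrict (Icc (0:ℝ) T) = 0 := by
      rcases lt_or_eq_of_le hT with h | h
      · rw [Icc_eq_empty (not_le.2 h), Measure.restrict_empty]
      · subst h
        rw [Icc_self, Measure.restrict_singleton]
        simp
    rw [hz]
    simp [ae_zero]
  have hT0 : (0:ℝ) ≤ T := hT.le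
  set f : ℝ → ℝ := (Icc (0:ℝ) T).indicator (fun s => f₁ s - f₂ s) with hf
  have hint : IntegrableOn (fun s => f₁ s - f₂ s) (Icc (0:ℝ) T) volume := by
    rw [integrableOn_Icc_iff_integrableOn_Ioc]
    exact (h₁.sub h₂).1
  have hfi : Integrable f volume := (integrable_indicator_iff measurableSet_Icc).2 hint
  have hloc : LocallyIntegrable f volume := hfi.locallyIntegrable
  have key := IsUnifLocDoublingMeasure.ae_tendsto_average (μ := volume) hloc 1
  have main : ∀ᵐ x ∂(volume : Measure ℝ), x ∈ Ioo (0:ℝ) T → f₁ x = f₂ x := by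
    filter_upwards [key] with x hx hxm
    have hten : Tendsto (fun r : ℝ => ⨍ y in closedBall x r, f y) (𝓝[>] 0) (𝓝 (f x)) := by
      apply hx (fun _ => x) (fun r => r) tendsto_id
      filter_upwards [self_mem_nhdsWithin] with r (hr : 0 < r)
      simpa using hr.le
    have hev : ∀ᶠ r in 𝓝[>] (0:ℝ), (⨍ y in closedBall x r, f y) = 0 := by
      have hmem : Ioo (0:ℝ) (min x (T - x)) ∈ 𝓝[>] (0:ℝ) := by
        apply Ioo_mem_nhdsGT_of_mem
        constructor
        · rfl
        · exact lt_min hxm.1 (by linarith [hxm.2])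
      filter_upwards [hmem] with r hr
      have hr0 : 0 < r := hr.1
      have hsub : Icc (x - r) (x + r) ⊆ Icc (0:ℝ) T := by
        intro y hy
        constructor
        · have : r < x := lt_of_lt_of_le hr.2 (min_le_left _ _); linarith [hy.1]
        · have : r < T - x := lt_of_lt_of_le hr.2 (min_le_right _ _); linarith [hy.2]
      have hintz : (∫ y in closedBall x r, f y) = 0 := by
        rw [Real.closedBall_eq_Icc, integral_Icc_eq_integral_Ioc]
        have h1 : ∀ y ∈ Ioc (x - r) (x + r), f y = f₁ y - f₂ y := by
          intro y hy
          exact indicator_of_mem (hsub (Ioc_subset_Icc_self hy)) _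
        rw [setIntegral_congr_fun measurableSet_Ioc h1]
        have hle : x - r ≤ x + r := by linarith
        rw [← intervalIntegral.integral_of_le hle]
        have hmem1 : x + r ∈ Icc (0:ℝ) T := hsub (by constructor <;> linarith)
        have hmem2 : x - r ∈ Icc (0:ℝ) T := hsub (by constructor <;> linarith)
        have hi1 : IntervalIntegrable (fun s => f₁ s - f₂ s) volume 0 (x + r) :=
          (h₁.sub h₂).mono_set (by
            rw [uIcc_of_le hmem1.1, uIcc_of_le hT0]; exact Icc_subset_Icc le_rfl hmem1.2)
        have hi2 : IntervalIntegrable (fun s => f₁ s - f₂ s) volume 0 (x - r) :=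
          (h₁.sub h₂).mono_set (by
            rw [uIcc_of_le hmem2.1, uIcc_of_le hT0]; exact Icc_subset_Icc le_rfl hmem2.2)
        have : (∫ s in (x - r)..(x + r), (f₁ s - f₂ s)) =
            (∫ s in (0:ℝ)..(x + r), (f₁ s - f₂ s)) - ∫ s in (0:ℝ)..(x - r), (f₁ s - f₂ s) :=
          (intervalIntegral.integral_interval_sub_left hi1 hi2).symm
        rw [this]
        have e1 : (∫ s in (0:ℝ)..(x + r), (f₁ s - f₂ s)) = 0 := by
          rw [intervalIntegral.integral_sub
            (h₁.mono_set (by rw [uIcc_of_le hmem1.1, uIcc_of_le hT0]; exact Icc_subset_Icc le_rfl hmem1.2))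
            (h₂.mono_set (by rw [uIcc_of_le hmem1.1, uIcc_of_le hT0]; exact Icc_subset_Icc le_rfl hmem1.2)),
            heq _ hmem1, sub_self]
        have e2 : (∫ s in (0:ℝ)..(x - r), (f₁ s - f₂ s)) = 0 := by
          rw [intervalIntegral.integral_sub
            (h₁.mono_set (by rw [uIcc_of_le hmem2.1, uIcc_of_le hT0]; exact Icc_subset_Icc le_rfl hmem2.2))
            (h₂.mono_set (by rw [uIcc_of_le hmem2.1, uIcc_of_le hT0]; exact Icc_subset_Icc le_rfl hmem2.2)),
            heq _ hmem2, sub_self]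
        rw [e1, e2, sub_zero]
      rw [setAverage_eq, hintz, smul_zero]
    have : f x = 0 := by
      have h0 : Tendsto (fun r : ℝ => ⨍ y in closedBall x r, f y) (𝓝[>] 0) (𝓝 0) :=
        Tendsto.congr' (Filter.EventuallyEq.symm hev) tendsto_const_nhds
      exact tendsto_nhds_unique hten h0
    have hfx : f x = f₁ x - f₂ x := indicator_of_mem (Ioo_subset_Icc_self hxm) _
    rw [hfx] at this; linarith
  have hends : ∀ᵐ x ∂(volume : Measure ℝ), x ∉ ({0, T} : Set ℝ) := by
    have : volume ({0, T} : Set ℝ) = 0 := (Set.toFinite _).measure_zero _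
    exact (measure_eq_zero_iff_ae_notMem).1 this
  rw [ae_restrict_iff' measurableSet_Icc]
  filter_upwards [main, hends] with x hx hx2 hxm
  apply hx
  rcases lt_or_eq_of_le hxm.1 with h | h
  · rcases lt_or_eq_of_le hxm.2 with h' | h'
    · exact ⟨h, h'⟩
    · exact absurd (by simp [h']) hx2
  · exact absurd (by simp [← h]) hx2

set_option maxHeartbeats 1000000 in
/-- A linear connection of springs realizes a Prandtl–Ishlinskii operator:
the total reaction force is the output of the PI operator with weights `ã_n`
and thresholds `ρ̃_n = r̃_n/ã_n` applied to the controlled elongation `g`. -/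
theorem linear_connection_is_PI
    (S : ℕ) (hS : 1 ≤ S) (c : Fin S → ℕ)
    (a r : LCEdge S c → ℝ) (ha : ∀ e, 0 < a e) (hr : ∀ e, 0 < r e)
    (T : ℝ) (hT : 0 < T)
    (g g' : ℝ → ℝ) (hg : IsACOn T g g') (hg0 : g 0 = 0)
    (ε ε' ee ee' : LCEdge S c → ℝ → ℝ)
    (hε0 : ∀ e, ε e 0 = 0) (hee0 : ∀ e, ee e 0 = 0)
    (hεac : ∀ e, IsACOn T (ε e) (ε' e))
    (hstop : ∀ e : LCEdge S c, IsStopOutput (r e / a e) T (ε' e) (ee e) (ee' e))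
    (hstress : ∀ n : Fin S, ∀ j j' : Fin (c n + 2), ∀ t ∈ Icc (0 : ℝ) T,
      a ⟨n, j⟩ * ee ⟨n, j⟩ t = a ⟨n, j'⟩ * ee ⟨n, j'⟩ t)
    (hsum : ∀ n : Fin S, ∀ t ∈ Icc (0 : ℝ) T, ∑ j : Fin (c n + 2), ε ⟨n, j⟩ t = g t) :
    ∃ E E' : Fin S → ℝ → ℝ,
      (∀ n, IsStopOutput (rtilLC r n / atilLC a n) T g' (E n) (E' n)) ∧
      ∀ t ∈ Icc (0 : ℝ) T,
        ∑ n : Fin S, a ⟨n, 0⟩ * ee ⟨n, 0⟩ t = ∑ n : Fin S, atilLC a n * E n t := by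
  classical
  -- helper: integrability on subintervals
  have hmono : ∀ (f : ℝ → ℝ), IntervalIntegrable f volume 0 T →
      ∀ t ∈ Icc (0 : ℝ) T, IntervalIntegrable f volume 0 t := by
    intro f hf t ht
    exact hf.mono_set (by
      rw [Set.uIcc_of_le ht.1, Set.uIcc_of_le hT.le]
      exact Icc_subset_Icc le_rfl ht.2)
  set A : Fin S → ℝ := fun n => ∑ j : Fin (c n + 2), (a ⟨n, j⟩)⁻¹ with hA
  have hApos : ∀ n, 0 < A n := by
    intro n
    apply Finset.sum_pos (fun j _ => inv_pos.2 (ha ⟨n, j⟩)) Finset.univ_nonempty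
  have hatil : ∀ n, atilLC a n = (A n)⁻¹ := fun n => rfl
  have hatilpos : ∀ n, 0 < atilLC a n := fun n => by
    rw [hatil]; exact inv_pos.2 (hApos n)
  have hrtille : ∀ (n : Fin S) (j : Fin (c n + 2)), rtilLC r n ≤ r ⟨n, j⟩ := by
    intro n j
    exact Finset.inf'_le _ (Finset.mem_univ j)
  have hρ : ∀ n, rtilLC r n / atilLC a n = rtilLC r n * A n := by
    intro n
    rw [hatil, div_eq_mul_inv, inv_inv]
  -- pointwise identity for deformations within a chain
  have heej : ∀ (n : Fin S) (j : Fin (c n + 2)), ∀ t ∈ Icc (0 : ℝ) T,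
      ee ⟨n, j⟩ t = (a ⟨n, j⟩)⁻¹ * (a ⟨n, 0⟩ * ee ⟨n, 0⟩ t) := by
    intro n j t ht
    have h := hstress n j 0 t ht
    have hj := (ha ⟨n, j⟩).ne'
    field_simp
    linear_combination h
  -- the stress is bounded by the minimal threshold
  have hsigb : ∀ (n : Fin S), ∀ t ∈ Icc (0 : ℝ) T,
      |a ⟨n, 0⟩ * ee ⟨n, 0⟩ t| ≤ rtilLC r n := by
    intro n t ht
    apply Finset.le_inf'
    intro j _
    have h := hstress n 0 j t ht
    have hb := (hstop ⟨n, j⟩).2.2.1 t ht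
    have : a ⟨n, 0⟩ * ee ⟨n, 0⟩ t = a ⟨n, j⟩ * ee ⟨n, j⟩ t := h
    rw [this, abs_mul, abs_of_pos (ha ⟨n, j⟩)]
    calc a ⟨n, j⟩ * |ee ⟨n, j⟩ t| ≤ a ⟨n, j⟩ * (r ⟨n, j⟩ / a ⟨n, j⟩) :=
          mul_le_mul_of_nonneg_left hb (ha ⟨n, j⟩).le
      _ = r ⟨n, j⟩ := by rw [mul_comm, div_mul_cancel₀ _ (ha ⟨n, j⟩).ne']
  -- the candidate outputs
  refine ⟨fun n t => ∑ j : Fin (c n + 2), ee ⟨n, j⟩ t,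
          fun n t => ∑ j : Fin (c n + 2), ee' ⟨n, j⟩ t, ?_, ?_⟩
  · intro n
    have hE : ∀ t ∈ Icc (0 : ℝ) T,
        (∑ j : Fin (c n + 2), ee ⟨n, j⟩ t) = A n * (a ⟨n, 0⟩ * ee ⟨n, 0⟩ t) := by
      intro t ht
      rw [hA]
      rw [Finset.sum_mul]
      exact Finset.sum_congr rfl fun j _ => heej n j t ht
    refine ⟨⟨?_, ?_⟩, ?_, ?_, ?_⟩
    · have h1 := IntervalIntegrable.sum (μ := volume) (a := (0:ℝ)) (b := T)
        (f := fun (j : Fin (c n + 2)) t => ee' ⟨n, j⟩ t) Finset.univ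
        (fun j _ => (hstop ⟨n, j⟩).1.1)
      have h2 : (∑ j : Fin (c n + 2), fun t => ee' ⟨n, j⟩ t)
          = fun t => ∑ j : Fin (c n + 2), ee' ⟨n, j⟩ t := by
        funext t; simp
      rwa [h2] at h1
    · intro t ht
      have hint : ∀ j : Fin (c n + 2), IntervalIntegrable (ee' ⟨n, j⟩) volume 0 t :=
        fun j => hmono _ (hstop ⟨n, j⟩).1.1 t ht
      show (∑ j : Fin (c n + 2), ee ⟨n, j⟩ t)
          = (∑ j : Fin (c n + 2), ee ⟨n, j⟩ 0) +
            ∫ s in (0:ℝ)..t, ∑ j : Fin (c n + 2), ee' ⟨n, j⟩ s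
      rw [intervalIntegral.integral_finset_sum (μ := volume)
        (f := fun (j : Fin (c n + 2)) s => ee' ⟨n, j⟩ s) fun j _ => hint j]
      have : ∀ j : Fin (c n + 2), ee ⟨n, j⟩ t = ee ⟨n, j⟩ 0 + ∫ s in (0:ℝ)..t, ee' ⟨n, j⟩ s :=
        fun j => (hstop ⟨n, j⟩).1.2 t ht
      have h0 : ∀ j : Fin (c n + 2), ee ⟨n, j⟩ 0 = 0 := fun j => hee0 _
      simp only [h0]
      rw [Finset.sum_congr rfl fun j _ => this j]
      simp [h0]
    · exact Finset.sum_eq_zero fun j _ => hee0 _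
    · intro t ht
      show |∑ j : Fin (c n + 2), ee ⟨n, j⟩ t| ≤ rtilLC r n / atilLC a n
      rw [hE t ht, hρ n, abs_mul, abs_of_pos (hApos n), mul_comm]
      exact mul_le_mul_of_nonneg_right (hsigb n t ht) (hApos n).le
    · -- the variational inequality
      have hgae : ∀ᵐ t ∂(volume.restrict (Icc (0 : ℝ) T)),
          g' t = ∑ j : Fin (c n + 2), ε' ⟨n, j⟩ t := by
        have hi2 : IntervalIntegrable (fun t => ∑ j : Fin (c n + 2), ε' ⟨n, j⟩ t)
            volume 0 T := by
          have h1 := IntervalIntegrable.sum (μ := volume) (a := (0:ℝ)) (b := T)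
            (f := fun (j : Fin (c n + 2)) t => ε' ⟨n, j⟩ t) Finset.univ
            (fun j _ => (hεac ⟨n, j⟩).1)
          have h2 : (∑ j : Fin (c n + 2), fun t => ε' ⟨n, j⟩ t)
              = fun t => ∑ j : Fin (c n + 2), ε' ⟨n, j⟩ t := by
            funext t; simp
          rwa [h2] at h1
        apply ae_eq_of_intInt_eq hg.1 hi2
        intro t ht
        have h1 : (∫ s in (0:ℝ)..t, g' s) = g t := by
          have := hg.2 t ht
          rw [this, hg0, zero_add]
        have hint : ∀ j : Fin (c n + 2), IntervalIntegrable (ε' ⟨n, j⟩) volume 0 t :=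
          fun j => hmono _ (hεac ⟨n, j⟩).1 t ht
        have h2 : (∫ s in (0:ℝ)..t, ∑ j : Fin (c n + 2), ε' ⟨n, j⟩ s) = g t := by
          rw [intervalIntegral.integral_finset_sum (μ := volume)
            (f := fun (j : Fin (c n + 2)) s => ε' ⟨n, j⟩ s) fun j _ => hint j]
          have : ∀ j : Fin (c n + 2), (∫ s in (0:ℝ)..t, ε' ⟨n, j⟩ s) = ε ⟨n, j⟩ t := by
            intro j
            have := (hεac ⟨n, j⟩).2 t ht
            rw [this, hε0 ⟨n, j⟩, zero_add]
          rw [Finset.sum_congr rfl fun j _ => this j]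
          exact hsum n t ht
        rw [h1, h2]
      have hstopae : ∀ᵐ t ∂(volume.restrict (Icc (0 : ℝ) T)),
          ∀ j : Fin (c n + 2), ∀ z ∈ Icc (-(r ⟨n, j⟩ / a ⟨n, j⟩)) (r ⟨n, j⟩ / a ⟨n, j⟩),
            0 ≤ (ε' ⟨n, j⟩ t - ee' ⟨n, j⟩ t) * (ee ⟨n, j⟩ t - z) :=
        ae_all_iff.2 fun j => (hstop ⟨n, j⟩).2.2.2
      filter_upwards [hgae, hstopae, ae_restrict_mem measurableSet_Icc]
        with t htg hts htm
      intro z hz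
      show 0 ≤ (g' t - ∑ j : Fin (c n + 2), ee' ⟨n, j⟩ t) *
        ((∑ j : Fin (c n + 2), ee ⟨n, j⟩ t) - z)
      rw [htg, ← Finset.sum_sub_distrib, Finset.sum_mul]
      apply Finset.sum_nonneg
      intro j _
      set zj : ℝ := (a ⟨n, j⟩)⁻¹ * (A n)⁻¹ * z with hzj
      have hzjmem : zj ∈ Icc (-(r ⟨n, j⟩ / a ⟨n, j⟩)) (r ⟨n, j⟩ / a ⟨n, j⟩) := by
        rw [mem_Icc, ← abs_le] at hz ⊢
        rw [hρ n] at hz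
        have habs : |zj| = (a ⟨n, j⟩)⁻¹ * (A n)⁻¹ * |z| := by
          rw [hzj, abs_mul, abs_of_pos (mul_pos (inv_pos.2 (ha ⟨n, j⟩)) (inv_pos.2 (hApos n)))]
        rw [habs]
        calc (a ⟨n, j⟩)⁻¹ * (A n)⁻¹ * |z|
            ≤ (a ⟨n, j⟩)⁻¹ * (A n)⁻¹ * (rtilLC r n * A n) := by
              apply mul_le_mul_of_nonneg_left hz
              exact (mul_pos (inv_pos.2 (ha _)) (inv_pos.2 (hApos n))).le
          _ = (a ⟨n, j⟩)⁻¹ * rtilLC r n := by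
              have hc : (A n)⁻¹ * (rtilLC r n * A n) = rtilLC r n := by
                rw [mul_comm (rtilLC r n), ← mul_assoc,
                  inv_mul_cancel₀ (hApos n).ne', one_mul]
              rw [mul_assoc, hc]
          _ ≤ (a ⟨n, j⟩)⁻¹ * r ⟨n, j⟩ := by
              apply mul_le_mul_of_nonneg_left (hrtille n j)
              exact (inv_pos.2 (ha _)).le
          _ = r ⟨n, j⟩ / a ⟨n, j⟩ := by rw [inv_mul_eq_div]
      have hkey : (ε' ⟨n, j⟩ t - ee' ⟨n, j⟩ t) * ((∑ i : Fin (c n + 2), ee ⟨n, i⟩ t) - z)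
          = (a ⟨n, j⟩ * A n) * ((ε' ⟨n, j⟩ t - ee' ⟨n, j⟩ t) * (ee ⟨n, j⟩ t - zj)) := by
        have hE : (∑ i : Fin (c n + 2), ee ⟨n, i⟩ t) = A n * (a ⟨n, 0⟩ * ee ⟨n, 0⟩ t) := by
          rw [hA, Finset.sum_mul]
          exact Finset.sum_congr rfl fun i _ => heej n i t htm
        rw [hE, heej n j t htm, hzj]
        have h1 : (a ⟨n, j⟩ : ℝ) ≠ 0 := (ha _).ne'
        have h2 : (A n : ℝ) ≠ 0 := (hApos n).ne'
        field_simp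
      rw [hkey]
      exact mul_nonneg (mul_pos (ha _) (hApos n)).le (hts j zj hzjmem)
  · intro t ht
    refine Finset.sum_congr rfl fun n _ => ?_
    show a ⟨n, 0⟩ * ee ⟨n, 0⟩ t = atilLC a n * ∑ j : Fin (c n + 2), ee ⟨n, j⟩ t
    have hE : (∑ j : Fin (c n + 2), ee ⟨n, j⟩ t) = A n * (a ⟨n, 0⟩ * ee ⟨n, 0⟩ t) := by
      rw [hA, Finset.sum_mul]
      exact Finset.sum_congr rfl fun j _ => heej n j t ht
    rw [hE, hatil, inv_mul_cancel_left₀ (hApos n).ne']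

end
end
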